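/- arXiv:2412.03066 — 11 statements merged into one kernel-verified Lean document; each statement's English description precedes it below -/
import Mathlib

section
/- If X is a mutual-visibility set of a graph G and x ∈ X, then X \ {x} is a mutual-visibility set of the vertex-deleted subgraph G − x. -/
open SimpleGraph

variable {V : Type*}

/-- Vertices `u` and `v` are `X`-visible in `G`: some shortest `u,v`-walk has
no internal vertex in `X`. -/
def XVisible (G : SimpleGraph V) (X : Set V) (u v : V) : Prop :=
  ∃ p : G.Walk u v, p.length = G.dist u v ∧
    ∀ w ∈ p.support, w ≠ u → w ≠ v → w ∉ X

/-- `X` is a mutual-visibility set of `G`. -/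
def MutualVis (G : SimpleGraph V) (X : Set V) : Prop :=
  ∀ ⦃u⦄, u ∈ X → ∀ ⦃v⦄, v ∈ X → XVisible G X u v

/-- `X` is a total mutual-visibility set of `G`. -/
def TotalVis (G : SimpleGraph V) (X : Set V) : Prop :=
  ∀ u v : V, XVisible G X u v

/-- `X` is a dual mutual-visibility set of `G`. -/
def DualVis (G : SimpleGraph V) (X : Set V) : Prop :=
  MutualVis G X ∧ ∀ ⦃u⦄, u ∉ X → ∀ ⦃v⦄, v ∉ X → XVisible G X u v

/-- `X` is an outer mutual-visibility set of `G`. -/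
def OuterVis (G : SimpleGraph V) (X : Set V) : Prop :=
  MutualVis G X ∧ ∀ ⦃u⦄, u ∈ X → ∀ ⦃v⦄, v ∉ X → XVisible G X u v

/-- `S` induces a convex subgraph of `G`. -/
def IsConvexSet (G : SimpleGraph V) (S : Set V) : Prop :=
  ∀ u ∈ S, ∀ v ∈ S, ∀ p : G.Walk u v, p.length = G.dist u v →
    ∀ w ∈ p.support, w ∈ S

/-- The cycle graph on `ZMod n`. -/
def cyc (n : ℕ) : SimpleGraph (ZMod n) :=
  SimpleGraph.fromRel (fun u v => u - v = 1)

lemma walk_lift {G : SimpleGraph V} {s : Set V} :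
    ∀ {a b : V} (p : G.Walk a b) (_ : ∀ w ∈ p.support, w ∈ s) (ha : a ∈ s) (hb : b ∈ s),
      ∃ q : (G.induce s).Walk ⟨a, ha⟩ ⟨b, hb⟩,
        q.map (SimpleGraph.Embedding.induce s).toHom = p := by
  intro a b p
  induction p with
  | nil => intro _ ha hb; exact ⟨.nil, rfl⟩
  | @cons a c b h p ih =>
    intro hs ha hb
    have hc : c ∈ s := hs c (by simp)
    obtain ⟨q, hq⟩ := ih (fun w hw => hs w (by simp [hw])) hc hb
    exact ⟨.cons (by simpa using h) q, by simp [hq]⟩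

theorem stmt_2 (G : SimpleGraph V) (X : Set V) (x : V)
    (hX : MutualVis G X) (hx : x ∈ X) :
    MutualVis (G.induce ({x}ᶜ : Set V))
      (Subtype.val ⁻¹' (X \ {x}) : Set ({x}ᶜ : Set V)) := by
  intro u hu v hv
  obtain ⟨p, hlen, hint⟩ := hX hu.1 hv.1
  have hsupp : ∀ w ∈ p.support, w ∈ ({x}ᶜ : Set V) := by
    intro w hw
    by_cases h1 : w = (u : V)
    · subst h1; exact u.2
    by_cases h2 : w = (v : V)
    · subst h2; exact v.2
    · intro hwx
      exact hint w hw h1 h2 (by simpa [Set.mem_singleton_iff.mp hwx] using hx)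
  obtain ⟨q, hq⟩ := walk_lift p hsupp u.2 v.2
  have hqlen : q.length = p.length := by
    have := SimpleGraph.Walk.length_map (SimpleGraph.Embedding.induce ({x}ᶜ : Set V)).toHom q
    rw [← hq]; exact this.symm
  have hdle : (G.induce ({x}ᶜ : Set V)).dist u v ≤ p.length := by
    have := SimpleGraph.dist_le q
    simpa [hqlen] using this
  have hdge : p.length ≤ (G.induce ({x}ᶜ : Set V)).dist u v := by
    obtain ⟨r, hr⟩ := (q.reachable).exists_walk_length_eq_dist
    have : G.dist (u : V) (v : V) ≤ (r.map (SimpleGraph.Embedding.induce ({x}ᶜ : Set V)).toHom).length :=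
      SimpleGraph.dist_le _
    have h3 := SimpleGraph.Walk.length_map (SimpleGraph.Embedding.induce ({x}ᶜ : Set V)).toHom r
    exact hlen.le.trans (this.trans (h3.trans hr).le)
  refine ⟨q, by rw [hqlen]; exact le_antisymm hdge hdle, ?_⟩
  intro w hw hwu hwv hwX
  have hwp : (w : V) ∈ p.support := by
    have h4 : (w : V) ∈ (q.map (SimpleGraph.Embedding.induce ({x}ᶜ : Set V)).toHom).support := by
      rw [SimpleGraph.Walk.support_map]
      exact List.mem_map.mpr ⟨w, hw, rfl⟩
    rw [← hq]; exact h4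
  exact hint _ hwp (fun h => hwu (Subtype.ext h)) (fun h => hwv (Subtype.ext h)) hwX.1
end

section
/- If H is a convex subgraph of a graph G and X is a mutual-visibility set of G, then X ∩ V(H) is a mutual-visibility set of H. -/
open SimpleGraph

variable {V : Type*}

lemma liftWalk (G : SimpleGraph V) (S : Set V) :
    ∀ {u v : V} (p : G.Walk u v) (hp : ∀ w ∈ p.support, w ∈ S),
    ∃ q : (G.induce S).Walk ⟨u, hp u p.start_mem_support⟩ ⟨v, hp v p.end_mem_support⟩,
      q.length = p.length ∧ ∀ w ∈ q.support, (w : V) ∈ p.support := by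
  intro u v p
  induction p with
  | nil => intro hp; exact ⟨.nil, rfl, by simp⟩
  | cons h p ih =>
    intro hp
    obtain ⟨q, hq, hsup⟩ := ih (fun w hw => hp w (by simp [hw]))
    refine ⟨Walk.cons (by exact h) q, by exact congrArg (· + 1) hq, ?_⟩
    intro w hw
    rcases Walk.mem_support_iff _ |>.mp hw with h1 | h2
    · simp [h1]
    · simp only [Walk.support_cons, List.mem_cons]
      exact Or.inr (hsup w (by exact h2))

theorem stmt_3 (G : SimpleGraph V) (S : Set V) (hS : IsConvexSet G S)
    (X : Set V) (hX : MutualVis G X) :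
    MutualVis (G.induce S) (Subtype.val ⁻¹' X : Set S) := by
  intro u hu v hv
  obtain ⟨p, hlen, hint⟩ := hX hu hv
  have hsup : ∀ w ∈ p.support, w ∈ S := hS u.val u.2 v.val v.2 p hlen
  obtain ⟨q, hq, hq2⟩ := liftWalk G S p hsup
  have hd : (G.induce S).dist u v = G.dist u.val v.val := by
    refine le_antisymm (hlen ▸ hq ▸ (SimpleGraph.dist_le (q : (G.induce S).Walk u v) :)) ?_
    have hr : (G.induce S).Reachable u v := ⟨q⟩
    obtain ⟨r, hrl⟩ := hr.exists_walk_length_eq_dist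
    calc G.dist u.val v.val ≤ (r.map (SimpleGraph.Embedding.induce S).toHom).length :=
          SimpleGraph.dist_le _
      _ = r.length := Walk.length_map _ _
      _ = _ := hrl
  refine ⟨q, by rw [hd, hq, hlen], ?_⟩
  intro w hw hwu hwv hwX
  exact hint w.val (hq2 w hw) (fun h => hwu (Subtype.ext h)) (fun h => hwv (Subtype.ext h)) hwX
end

section
/- If H is a convex subgraph of a graph G and X is a total mutual-visibility set of G, then X ∩ V(H) is a total mutual-visibility set of H. -/
open SimpleGraph

variable {V : Type*}

/-- Lift a walk whose support lies in `S` to the induced subgraph. -/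
def liftWalk_s4 (G : SimpleGraph V) (S : Set V) :
    ∀ {u v : V} (p : G.Walk u v), (∀ w ∈ p.support, w ∈ S) →
      ∀ (hu : u ∈ S) (hv : v ∈ S),
      {q : (G.induce S).Walk ⟨u, hu⟩ ⟨v, hv⟩ //
        q.length = p.length ∧ q.support.map Subtype.val = p.support}
  | u, _, SimpleGraph.Walk.nil, _, hu, hv => ⟨SimpleGraph.Walk.nil, by simp⟩
  | u, v, @SimpleGraph.Walk.cons _ _ _ w _ h p, hsup, hu, hv =>
    let hw : w ∈ S := hsup w (by simp)
    let ⟨q, hq⟩ := liftWalk_s4 G S p (fun x hx => hsup x (by simp [hx])) hw hv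
    ⟨SimpleGraph.Walk.cons (by exact h) q, by exact ⟨congrArg (· + 1) hq.1, congrArg (u :: ·) hq.2⟩⟩

theorem stmt_4 (G : SimpleGraph V) (S : Set V) (hS : IsConvexSet G S)
    (X : Set V) (hX : TotalVis G X) :
    TotalVis (G.induce S) (Subtype.val ⁻¹' X : Set S) := by
  rintro ⟨u, hu⟩ ⟨v, hv⟩
  obtain ⟨p, hlen, hint⟩ := hX u v
  have hsub : ∀ w ∈ p.support, w ∈ S := hS u hu v hv p hlen
  obtain ⟨q, hqlen, hqsup⟩ := liftWalk_s4 G S p hsub hu hv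
  -- the hom from the induced graph back to G
  let f : G.induce S →g G := ⟨Subtype.val, fun h => h⟩
  have hreach : (G.induce S).Reachable ⟨u, hu⟩ ⟨v, hv⟩ := ⟨q⟩
  have hge : G.dist u v ≤ (G.induce S).dist ⟨u, hu⟩ ⟨v, hv⟩ := by
    obtain ⟨r, hr⟩ := hreach.exists_walk_length_eq_dist
    calc G.dist u v ≤ (r.map f).length := SimpleGraph.dist_le _
      _ = (G.induce S).dist ⟨u, hu⟩ ⟨v, hv⟩ := by simp [hr]
  have hdq : q.length = (G.induce S).dist ⟨u, hu⟩ ⟨v, hv⟩ :=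
    le_antisymm (hqlen ▸ hlen ▸ hge) (SimpleGraph.dist_le _)
  refine ⟨q, hdq, ?_⟩
  rintro ⟨w, hwS⟩ hwsup hwu hwv hwX
  have hwp : w ∈ p.support := by
    rw [← hqsup]; exact List.mem_map_of_mem (f := Subtype.val) hwsup
  exact hint w hwp (fun e => hwu (Subtype.ext e)) (fun e => hwv (Subtype.ext e)) hwX
end

section
/- If H is a convex subgraph of a graph G and X is a dual mutual-visibility set of G, then X ∩ V(H) is a dual mutual-visibility set of H. -/
open SimpleGraph

variable {V : Type*}

lemma lift_walk (G : SimpleGraph V) (S : Set V) :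
    ∀ {u v : V} (p : G.Walk u v) (h : ∀ w ∈ p.support, w ∈ S),
    ∃ q : (G.induce S).Walk ⟨u, h u p.start_mem_support⟩ ⟨v, h v p.end_mem_support⟩,
      q.map (Embedding.induce S).toHom = p := by
  intro u v p
  induction p with
  | nil => intro h; exact ⟨Walk.nil, rfl⟩
  | cons ha p ih =>
      intro h
      obtain ⟨q, hq⟩ := ih (fun w hw => h w (by simp [hw]))
      exact ⟨Walk.cons (by exact ha) q, by exact congrArg (Walk.cons ha) hq⟩

lemma key (G : SimpleGraph V) (S : Set V) (hS : IsConvexSet G S) (X : Set V)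
    {u v : S} (h : XVisible G X u.val v.val) :
    XVisible (G.induce S) (Subtype.val ⁻¹' X) u v := by
  obtain ⟨p, hlen, hint⟩ := h
  have hsup : ∀ w ∈ p.support, w ∈ S := hS u.val u.2 v.val v.2 p hlen
  obtain ⟨q, hq⟩ := lift_walk G S p hsup
  have hu : (⟨u.val, hsup u.val p.start_mem_support⟩ : S) = u := rfl
  have hv : (⟨v.val, hsup v.val p.end_mem_support⟩ : S) = v := rfl
  refine ⟨q.copy hu hv, ?_, ?_⟩
  · have hql : q.length = G.dist u.val v.val := by
      rw [← hlen]
      exact (Walk.length_map (f := (Embedding.induce S).toHom) (p := q)).symm.trans (congrArg Walk.length hq)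
    have h1 : (G.induce S).dist u v ≤ q.length := SimpleGraph.dist_le q
    have hreach : (G.induce S).Reachable u v := ⟨q⟩
    obtain ⟨r, hr⟩ := hreach.exists_walk_length_eq_dist
    have h2 : G.dist u.val v.val ≤ (G.induce S).dist u v := by
      rw [← hr, ← Walk.length_map (f := (Embedding.induce S).toHom)]
      exact SimpleGraph.dist_le _
    simp only [Walk.length_copy]
    omega
  · intro w hw hwu hwv
    simp only [Walk.support_copy] at hw
    have : w.val ∈ p.support := by
      have h2 : w.val ∈ (q.map (Embedding.induce S).toHom).support := by
        rw [Walk.support_map]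
        exact List.mem_map.mpr ⟨w, hw, rfl⟩
      rw [← hq]
      exact h2
    intro hwX
    exact hint w.val this (fun h' => hwu (Subtype.ext (hu ▸ h')))
      (fun h' => hwv (Subtype.ext (hv ▸ h'))) hwX


theorem stmt_5 (G : SimpleGraph V) (S : Set V) (hS : IsConvexSet G S)
    (X : Set V) (hX : DualVis G X) :
    DualVis (G.induce S) (Subtype.val ⁻¹' X : Set S) := by
  constructor
  · intro u hu v hv
    exact key G S hS X (hX.1 hu hv)
  · intro u hu v hv
    exact key G S hS X (hX.2 hu hv)
end

section
/- Let G_n (n ≥ 2) be the graph obtained from n disjoint 5-cycles by selecting one edge in each and identifying these n edges into a single edge uv. Then the dual mutual-visibility number of G_n equals 2. -/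
open SimpleGraph

variable {V : Type*}

/-- The graph obtained from `n` disjoint 5-cycles, identifying one edge of
each into a single edge `uv`, where `u = Sum.inr 0`, `v = Sum.inr 1`, and the
`i`-th cycle is `u, (i,0), (i,1), (i,2), v`. -/
def Gn (n : ℕ) : SimpleGraph ((Fin n × Fin 3) ⊕ Fin 2) :=
  SimpleGraph.fromRel (fun a b =>
    (a = Sum.inr 0 ∧ b = Sum.inr 1) ∨
    (∃ i, a = Sum.inr 0 ∧ b = Sum.inl (i, 0)) ∨
    (∃ i, a = Sum.inl (i, 0) ∧ b = Sum.inl (i, 1)) ∨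
    (∃ i, a = Sum.inl (i, 1) ∧ b = Sum.inl (i, 2)) ∨
    (∃ i, a = Sum.inl (i, 2) ∧ b = Sum.inr 1))

namespace Aux
variable {n : ℕ}

abbrev U : (Fin n × Fin 3) ⊕ Fin 2 := Sum.inr 0
abbrev W : (Fin n × Fin 3) ⊕ Fin 2 := Sum.inr 1
abbrev C (i : Fin n) (k : Fin 3) : (Fin n × Fin 3) ⊕ Fin 2 := Sum.inl (i, k)

lemma adj_U_iff {x : (Fin n × Fin 3) ⊕ Fin 2} :
    (Gn n).Adj U x ↔ x = W ∨ ∃ i, x = C i 0 := by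
  rw [Gn, fromRel_adj]
  constructor
  · rintro ⟨hne, h | h⟩ <;>
    · rcases h with ⟨h1, h2⟩ | ⟨i, h1, h2⟩ | ⟨i, h1, h2⟩ | ⟨i, h1, h2⟩ | ⟨i, h1, h2⟩ <;>
        simp_all [U, W, C] <;> tauto
  · rintro (rfl | ⟨i, rfl⟩)
    · exact ⟨by simp, Or.inl (Or.inl ⟨rfl, rfl⟩)⟩
    · exact ⟨by simp, Or.inl (Or.inr (Or.inl ⟨i, rfl, rfl⟩))⟩

lemma adj_W_iff {x : (Fin n × Fin 3) ⊕ Fin 2} :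
    (Gn n).Adj W x ↔ x = U ∨ ∃ i, x = C i 2 := by
  rw [Gn, fromRel_adj]
  constructor
  · rintro ⟨hne, h | h⟩ <;>
    · rcases h with ⟨h1, h2⟩ | ⟨i, h1, h2⟩ | ⟨i, h1, h2⟩ | ⟨i, h1, h2⟩ | ⟨i, h1, h2⟩ <;>
        simp_all [U, W, C] <;> tauto
  · rintro (rfl | ⟨i, rfl⟩)
    · exact ⟨by simp, Or.inr (Or.inl ⟨rfl, rfl⟩)⟩
    · exact ⟨by simp, Or.inr (Or.inr (Or.inr (Or.inr (Or.inr ⟨i, rfl, rfl⟩))))⟩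

lemma adj_C0_iff {i : Fin n} {x : (Fin n × Fin 3) ⊕ Fin 2} :
    (Gn n).Adj (C i 0) x ↔ x = U ∨ x = C i 1 := by
  rw [Gn, fromRel_adj]
  constructor
  · rintro ⟨hne, h | h⟩ <;>
    · rcases h with ⟨h1, h2⟩ | ⟨j, h1, h2⟩ | ⟨j, h1, h2⟩ | ⟨j, h1, h2⟩ | ⟨j, h1, h2⟩ <;>
        simp_all [U, W, C] <;> tauto
  · rintro (rfl | rfl)
    · exact ⟨by simp, Or.inr (Or.inr (Or.inl ⟨i, rfl, rfl⟩))⟩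
    · exact ⟨by simp, Or.inl (Or.inr (Or.inr (Or.inl ⟨i, rfl, rfl⟩)))⟩

lemma adj_C1_iff {i : Fin n} {x : (Fin n × Fin 3) ⊕ Fin 2} :
    (Gn n).Adj (C i 1) x ↔ x = C i 0 ∨ x = C i 2 := by
  rw [Gn, fromRel_adj]
  constructor
  · rintro ⟨hne, h | h⟩ <;>
    · rcases h with ⟨h1, h2⟩ | ⟨j, h1, h2⟩ | ⟨j, h1, h2⟩ | ⟨j, h1, h2⟩ | ⟨j, h1, h2⟩ <;>
        simp_all [U, W, C] <;> tauto
  · rintro (rfl | rfl)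
    · exact ⟨by simp, Or.inr (Or.inr (Or.inr (Or.inl ⟨i, rfl, rfl⟩)))⟩
    · exact ⟨by simp, Or.inl (Or.inr (Or.inr (Or.inr (Or.inl ⟨i, rfl, rfl⟩))))⟩

lemma adj_C2_iff {i : Fin n} {x : (Fin n × Fin 3) ⊕ Fin 2} :
    (Gn n).Adj (C i 2) x ↔ x = C i 1 ∨ x = W := by
  rw [Gn, fromRel_adj]
  constructor
  · rintro ⟨hne, h | h⟩ <;>
    · rcases h with ⟨h1, h2⟩ | ⟨j, h1, h2⟩ | ⟨j, h1, h2⟩ | ⟨j, h1, h2⟩ | ⟨j, h1, h2⟩ <;>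
        simp_all [U, W, C] <;> tauto
  · rintro (rfl | rfl)
    · exact ⟨by simp, Or.inr (Or.inr (Or.inr (Or.inr (Or.inl ⟨i, rfl, rfl⟩))))⟩
    · exact ⟨by simp, Or.inl (Or.inr (Or.inr (Or.inr (Or.inr ⟨i, rfl, rfl⟩))))⟩


variable {V : Type*} {G : SimpleGraph V} {X : Set V} {a b : V}

lemma walk_len2 (p : G.Walk a b) (h : p.length = 2) :
    ∃ x, ∃ _ : G.Adj a x, ∃ _ : G.Adj x b, p.support = [a, x, b] := by
  cases p with
  | nil => simp at h
  | cons h1 q =>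
    cases q with
    | nil => simp at h
    | cons h2 r =>
      cases r with
      | nil => exact ⟨_, h1, h2, by simp⟩
      | cons h3 s => simp [SimpleGraph.Walk.length_cons] at h

lemma walk_len3 (p : G.Walk a b) (h : p.length = 3) :
    ∃ x y, ∃ _ : G.Adj a x, ∃ _ : G.Adj x y, ∃ _ : G.Adj y b,
      p.support = [a, x, y, b] := by
  cases p with
  | nil => simp at h
  | cons h1 q =>
    have hq : q.length = 2 := by simpa using h
    obtain ⟨x, hx1, hx2, hs⟩ := walk_len2 q hq
    exact ⟨_, x, h1, hx1, hx2, by simp [hs]⟩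

lemma walk_len4 (p : G.Walk a b) (h : p.length = 4) :
    ∃ x y z, ∃ _ : G.Adj a x, ∃ _ : G.Adj x y, ∃ _ : G.Adj y z, ∃ _ : G.Adj z b,
      p.support = [a, x, y, z, b] := by
  cases p with
  | nil => simp at h
  | cons h1 q =>
    have hq : q.length = 3 := by simpa using h
    obtain ⟨x, y, hx1, hx2, hx3, hs⟩ := walk_len3 q hq
    exact ⟨_, x, y, h1, hx1, hx2, hx3, by simp [hs]⟩

lemma dist_eq_two (hne : a ≠ b) (hadj : ¬ G.Adj a b) {x : V}
    (h1 : G.Adj a x) (h2 : G.Adj x b) : G.dist a b = 2 := by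
  have hw : G.dist a b ≤ 2 := by
    have := SimpleGraph.dist_le (SimpleGraph.Walk.cons h1 (SimpleGraph.Walk.cons h2 SimpleGraph.Walk.nil))
    simpa using this
  have h0 : G.dist a b ≠ 0 := by
    rw [Ne, SimpleGraph.dist_eq_zero_iff_eq_or_not_reachable]
    push_neg
    exact ⟨hne, ⟨SimpleGraph.Walk.cons h1 (SimpleGraph.Walk.cons h2 SimpleGraph.Walk.nil)⟩⟩
  have h1' : G.dist a b ≠ 1 := fun h => hadj (SimpleGraph.dist_eq_one_iff_adj.mp h)
  omega

lemma dist_eq_three (hne : a ≠ b) (hadj : ¬ G.Adj a b)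
    (h2 : ∀ x, G.Adj a x → G.Adj x b → False) {x y : V}
    (hx : G.Adj a x) (hxy : G.Adj x y) (hyb : G.Adj y b) : G.dist a b = 3 := by
  have hr : G.Reachable a b :=
    ⟨SimpleGraph.Walk.cons hx (SimpleGraph.Walk.cons hxy (SimpleGraph.Walk.cons hyb SimpleGraph.Walk.nil))⟩
  have hw : G.dist a b ≤ 3 := by
    have := SimpleGraph.dist_le (SimpleGraph.Walk.cons hx (SimpleGraph.Walk.cons hxy (SimpleGraph.Walk.cons hyb SimpleGraph.Walk.nil)))
    simpa using this
  have h0 : G.dist a b ≠ 0 := by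
    rw [Ne, SimpleGraph.dist_eq_zero_iff_eq_or_not_reachable]; push_neg; exact ⟨hne, hr⟩
  have h1' : G.dist a b ≠ 1 := fun h => hadj (SimpleGraph.dist_eq_one_iff_adj.mp h)
  have h2' : G.dist a b ≠ 2 := by
    intro h
    obtain ⟨p, hp⟩ := hr.exists_walk_length_eq_dist
    rw [h] at hp
    obtain ⟨z, hz1, hz2, _⟩ := walk_len2 p hp
    exact h2 z hz1 hz2
  omega

lemma dist_eq_four (hne : a ≠ b) (hadj : ¬ G.Adj a b)
    (h2 : ∀ x, G.Adj a x → G.Adj x b → False)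
    (h3 : ∀ x y, G.Adj a x → G.Adj x y → G.Adj y b → False) {x y z : V}
    (hx : G.Adj a x) (hxy : G.Adj x y) (hyz : G.Adj y z) (hzb : G.Adj z b) :
    G.dist a b = 4 := by
  have hr : G.Reachable a b :=
    ⟨SimpleGraph.Walk.cons hx (SimpleGraph.Walk.cons hxy (SimpleGraph.Walk.cons hyz (SimpleGraph.Walk.cons hzb SimpleGraph.Walk.nil)))⟩
  have hw : G.dist a b ≤ 4 := by
    have := SimpleGraph.dist_le (SimpleGraph.Walk.cons hx (SimpleGraph.Walk.cons hxy (SimpleGraph.Walk.cons hyz (SimpleGraph.Walk.cons hzb SimpleGraph.Walk.nil))))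
    simpa using this
  have h0 : G.dist a b ≠ 0 := by
    rw [Ne, SimpleGraph.dist_eq_zero_iff_eq_or_not_reachable]; push_neg; exact ⟨hne, hr⟩
  have h1' : G.dist a b ≠ 1 := fun h => hadj (SimpleGraph.dist_eq_one_iff_adj.mp h)
  have h2' : G.dist a b ≠ 2 := by
    intro h
    obtain ⟨p, hp⟩ := hr.exists_walk_length_eq_dist
    rw [h] at hp
    obtain ⟨w, hw1, hw2, _⟩ := walk_len2 p hp
    exact h2 w hw1 hw2
  have h3' : G.dist a b ≠ 3 := by
    intro h
    obtain ⟨p, hp⟩ := hr.exists_walk_length_eq_dist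
    rw [h] at hp
    obtain ⟨w1, w2, hw1, hw2, hw3, _⟩ := walk_len3 p hp
    exact h3 w1 w2 hw1 hw2 hw3
  omega


variable {V : Type*} {G : SimpleGraph V} {X : Set V} {a b : V}

lemma vis_self (a : V) : XVisible G X a a :=
  ⟨SimpleGraph.Walk.nil, by simp [SimpleGraph.dist_self], by simp⟩

lemma vis_symm (h : XVisible G X a b) : XVisible G X b a := by
  obtain ⟨p, hl, hc⟩ := h
  exact ⟨p.reverse, by rw [SimpleGraph.Walk.length_reverse, hl, SimpleGraph.dist_comm],
    fun w hw h1 h2 => hc w (by rwa [SimpleGraph.Walk.support_reverse, List.mem_reverse] at hw) h2 h1⟩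

lemma vis1 (h : G.Adj a b) : XVisible G X a b := by
  refine ⟨SimpleGraph.Walk.cons h SimpleGraph.Walk.nil,
    by simp [SimpleGraph.dist_eq_one_iff_adj.mpr h], ?_⟩
  intro w hw h1 h2
  simp at hw
  rcases hw with rfl | rfl <;> simp_all

lemma vis2 (hd : G.dist a b = 2) {x : V} (h1 : G.Adj a x) (h2 : G.Adj x b)
    (hx : x ∉ X) : XVisible G X a b := by
  refine ⟨SimpleGraph.Walk.cons h1 (SimpleGraph.Walk.cons h2 SimpleGraph.Walk.nil),
    by simp [hd], ?_⟩
  intro w hw ha hb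
  simp at hw
  rcases hw with rfl | rfl | rfl
  · exact absurd rfl ha
  · exact hx
  · exact absurd rfl hb

lemma vis3 (hd : G.dist a b = 3) {x y : V} (h1 : G.Adj a x) (h2 : G.Adj x y)
    (h3 : G.Adj y b) (hx : x ∉ X) (hy : y ∉ X) : XVisible G X a b := by
  refine ⟨SimpleGraph.Walk.cons h1 (SimpleGraph.Walk.cons h2 (SimpleGraph.Walk.cons h3 SimpleGraph.Walk.nil)),
    by simp [hd], ?_⟩
  intro w hw ha hb
  simp at hw
  rcases hw with rfl | rfl | rfl | rfl
  · exact absurd rfl ha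
  · exact hx
  · exact hy
  · exact absurd rfl hb

lemma vis4 (hd : G.dist a b = 4) {x y z : V} (h1 : G.Adj a x) (h2 : G.Adj x y)
    (h3 : G.Adj y z) (h4 : G.Adj z b) (hx : x ∉ X) (hy : y ∉ X) (hz : z ∉ X) :
    XVisible G X a b := by
  refine ⟨SimpleGraph.Walk.cons h1 (SimpleGraph.Walk.cons h2 (SimpleGraph.Walk.cons h3 (SimpleGraph.Walk.cons h4 SimpleGraph.Walk.nil))),
    by simp [hd], ?_⟩
  intro w hw ha hb
  simp at hw
  rcases hw with rfl | rfl | rfl | rfl | rfl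
  · exact absurd rfl ha
  · exact hx
  · exact hy
  · exact hz
  · exact absurd rfl hb

end Aux

namespace Aux2
open SimpleGraph Aux
variable {n : ℕ} {X : Set ((Fin n × Fin 3) ⊕ Fin 2)}

-- basic adjacencies
lemma adjUW : (Gn n).Adj U W := adj_U_iff.mpr (Or.inl rfl)
lemma adjUC0 (i : Fin n) : (Gn n).Adj U (C i 0) := adj_U_iff.mpr (Or.inr ⟨i, rfl⟩)
lemma adjC0C1 (i : Fin n) : (Gn n).Adj (C i 0) (C i 1) := adj_C0_iff.mpr (Or.inr rfl)
lemma adjC1C2 (i : Fin n) : (Gn n).Adj (C i 1) (C i 2) := adj_C1_iff.mpr (Or.inr rfl)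
lemma adjC2W (i : Fin n) : (Gn n).Adj (C i 2) W := adj_C2_iff.mpr (Or.inr rfl)
lemma adjWC2 (i : Fin n) : (Gn n).Adj W (C i 2) := (adjC2W i).symm

-- non-adjacencies
lemma nadjUC1 (i : Fin n) : ¬ (Gn n).Adj U (C i 1) := by rw [adj_U_iff]; simp
lemma nadjUC2 (i : Fin n) : ¬ (Gn n).Adj U (C i 2) := by rw [adj_U_iff]; simp
lemma nadjWC0 (i : Fin n) : ¬ (Gn n).Adj W (C i 0) := by rw [adj_W_iff]; simp
lemma nadjWC1 (i : Fin n) : ¬ (Gn n).Adj W (C i 1) := by rw [adj_W_iff]; simp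
lemma nadjC0C2 (i j : Fin n) : ¬ (Gn n).Adj (C i 0) (C j 2) := by rw [adj_C0_iff]; simp
lemma nadjC0C0 {i j : Fin n} (h : i ≠ j) : ¬ (Gn n).Adj (C i 0) (C j 0) := by
  rw [adj_C0_iff]; simp [h.symm]
lemma nadjC2C2 {i j : Fin n} (h : i ≠ j) : ¬ (Gn n).Adj (C i 2) (C j 2) := by
  rw [adj_C2_iff]; simp
lemma nadjC1C1 {i j : Fin n} (h : i ≠ j) : ¬ (Gn n).Adj (C i 1) (C j 1) := by
  rw [adj_C1_iff]; simp
lemma nadjC0C1 {i j : Fin n} (h : i ≠ j) : ¬ (Gn n).Adj (C i 0) (C j 1) := by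
  rw [adj_C0_iff]; simp [h.symm]
lemma nadjC1C2' {i j : Fin n} (h : i ≠ j) : ¬ (Gn n).Adj (C i 1) (C j 2) := by
  rw [adj_C1_iff]; simp [h.symm]
lemma nadjC2C1 {i j : Fin n} (h : i ≠ j) : ¬ (Gn n).Adj (C i 2) (C j 1) := by
  rw [adj_C2_iff]; simp [h.symm]

-- ne facts
lemma neUW : (U : (Fin n × Fin 3) ⊕ Fin 2) ≠ W := by simp [U, W]
lemma neUC (i : Fin n) (k : Fin 3) : (U : (Fin n × Fin 3) ⊕ Fin 2) ≠ C i k := by simp [U, C]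
lemma neWC (i : Fin n) (k : Fin 3) : (W : (Fin n × Fin 3) ⊕ Fin 2) ≠ C i k := by simp [W, C]

-- distances
lemma dUC1 (i : Fin n) : (Gn n).dist U (C i 1) = 2 :=
  dist_eq_two (neUC i 1) (nadjUC1 i) (adjUC0 i) (adjC0C1 i)
lemma dUC2 (i : Fin n) : (Gn n).dist U (C i 2) = 2 :=
  dist_eq_two (neUC i 2) (nadjUC2 i) adjUW (adjWC2 i)
lemma dWC0 (i : Fin n) : (Gn n).dist W (C i 0) = 2 :=
  dist_eq_two (neWC i 0) (nadjWC0 i) adjUW.symm (adjUC0 i)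
lemma dWC1 (i : Fin n) : (Gn n).dist W (C i 1) = 2 :=
  dist_eq_two (neWC i 1) (nadjWC1 i) (adjWC2 i) (adjC1C2 i).symm
lemma dC0C2 (i : Fin n) : (Gn n).dist (C i 0) (C i 2) = 2 :=
  dist_eq_two (by simp [C]) (nadjC0C2 i i) (adjC0C1 i) (adjC1C2 i)
lemma dC0C0 {i j : Fin n} (h : i ≠ j) : (Gn n).dist (C i 0) (C j 0) = 2 :=
  dist_eq_two (by simp [C, h]) (nadjC0C0 h) (adjUC0 i).symm (adjUC0 j)
lemma dC2C2 {i j : Fin n} (h : i ≠ j) : (Gn n).dist (C i 2) (C j 2) = 2 :=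
  dist_eq_two (by simp [C, h]) (nadjC2C2 h) (adjC2W i) (adjWC2 j)

lemma dC0C1 {i j : Fin n} (h : i ≠ j) : (Gn n).dist (C i 0) (C j 1) = 3 := by
  refine dist_eq_three (by simp [C]) (nadjC0C1 h) ?_ (adjUC0 i).symm (adjUC0 j) (adjC0C1 j)
  intro x h1 h2
  rw [adj_C0_iff] at h1
  rcases h1 with rfl | rfl
  · exact nadjUC1 j h2
  · exact nadjC1C1 h h2

lemma dC1C0 {i j : Fin n} (h : i ≠ j) : (Gn n).dist (C i 1) (C j 0) = 3 := by
  rw [SimpleGraph.dist_comm]; exact dC0C1 h.symm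

lemma dC0C2' {i j : Fin n} (h : i ≠ j) : (Gn n).dist (C i 0) (C j 2) = 3 := by
  refine dist_eq_three (by simp [C]) (nadjC0C2 i j) ?_ (adjUC0 i).symm adjUW (adjWC2 j)
  intro x h1 h2
  rw [adj_C0_iff] at h1
  rcases h1 with rfl | rfl
  · exact nadjUC2 j h2
  · exact nadjC1C2' h h2

lemma dC2C0 {i j : Fin n} (h : i ≠ j) : (Gn n).dist (C i 2) (C j 0) = 3 := by
  rw [SimpleGraph.dist_comm]; exact dC0C2' h.symm

lemma dC1C2 {i j : Fin n} (h : i ≠ j) : (Gn n).dist (C i 1) (C j 2) = 3 := by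
  refine dist_eq_three (by simp [C, h]) (nadjC1C2' h) ?_ (adjC1C2 i) (adjC2W i) (adjWC2 j)
  intro x h1 h2
  rw [adj_C1_iff] at h1
  rcases h1 with rfl | rfl
  · exact nadjC0C2 i j h2
  · exact nadjC2C2 h h2

lemma dC2C1 {i j : Fin n} (h : i ≠ j) : (Gn n).dist (C i 2) (C j 1) = 3 := by
  rw [SimpleGraph.dist_comm]; exact dC1C2 h.symm

lemma dC1C1 {i j : Fin n} (h : i ≠ j) : (Gn n).dist (C i 1) (C j 1) = 4 := by
  refine dist_eq_four (by simp [C, h]) (nadjC1C1 h) ?_ ?_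
    (adjC1C2 i) (adjC2W i) (adjWC2 j) (adjC1C2 j).symm
  · intro x h1 h2
    rw [adj_C1_iff] at h1
    rcases h1 with rfl | rfl
    · exact nadjC0C1 h h2
    · exact nadjC2C1 h h2
  · intro x y h1 h2 h3
    rw [adj_C1_iff] at h1
    rcases h1 with rfl | rfl
    · rw [adj_C0_iff] at h2
      rcases h2 with rfl | rfl
      · exact nadjUC1 j h3
      · exact nadjC1C1 h h3
    · rw [adj_C2_iff] at h2
      rcases h2 with rfl | rfl
      · exact nadjC1C1 h h3
      · exact nadjWC1 j h3

end Aux2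
namespace Aux3
open SimpleGraph Aux Aux2
variable {n : ℕ}

lemma midUC1 {i : Fin n} {x} (h1 : (Gn n).Adj U x) (h2 : (Gn n).Adj x (C i 1)) :
    x = C i 0 := by
  rw [adj_U_iff] at h1
  rcases h1 with rfl | ⟨j, rfl⟩
  · exact absurd h2 (nadjWC1 i)
  · rw [adj_C0_iff] at h2
    rcases h2 with h | h
    · exact absurd h (by simp [C, U])
    · obtain rfl : i = j := by simpa [C] using h
      rfl

lemma midUC2 {i : Fin n} {x} (h1 : (Gn n).Adj U x) (h2 : (Gn n).Adj x (C i 2)) :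
    x = W := by
  rw [adj_U_iff] at h1
  rcases h1 with rfl | ⟨j, rfl⟩
  · rfl
  · exact absurd h2 (nadjC0C2 j i)

lemma midWC1 {i : Fin n} {x} (h1 : (Gn n).Adj W x) (h2 : (Gn n).Adj x (C i 1)) :
    x = C i 2 := by
  rw [adj_W_iff] at h1
  rcases h1 with rfl | ⟨j, rfl⟩
  · exact absurd h2 (nadjUC1 i)
  · rw [adj_C2_iff] at h2
    rcases h2 with h | h
    · obtain rfl : i = j := by simpa [C] using h
      rfl
    · exact absurd h (by simp [C, W])

lemma midWC0 {i : Fin n} {x} (h1 : (Gn n).Adj W x) (h2 : (Gn n).Adj x (C i 0)) :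
    x = U := by
  rw [adj_W_iff] at h1
  rcases h1 with rfl | ⟨j, rfl⟩
  · rfl
  · rw [adj_C2_iff] at h2
    rcases h2 with h | h
    · exact absurd h (by simp [C])
    · exact absurd h (by simp [C, W])

lemma midC0C2 {i : Fin n} {x} (h1 : (Gn n).Adj (C i 0) x) (h2 : (Gn n).Adj x (C i 2)) :
    x = C i 1 := by
  rw [adj_C0_iff] at h1
  rcases h1 with rfl | rfl
  · exact absurd h2 (nadjUC2 i)
  · rfl

lemma midC0C0 {i j : Fin n} (hij : i ≠ j) {x} (h1 : (Gn n).Adj (C i 0) x)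
    (h2 : (Gn n).Adj x (C j 0)) : x = U := by
  rw [adj_C0_iff] at h1
  rcases h1 with rfl | rfl
  · rfl
  · rw [adj_C1_iff] at h2
    rcases h2 with h | h
    · exact absurd h (by simp [C, hij.symm])
    · exact absurd h (by simp [C])

lemma midC2C2 {i j : Fin n} (hij : i ≠ j) {x} (h1 : (Gn n).Adj (C i 2) x)
    (h2 : (Gn n).Adj x (C j 2)) : x = W := by
  rw [adj_C2_iff] at h1
  rcases h1 with rfl | rfl
  · exact absurd h2 (nadjC1C2' hij)
  · rfl

lemma chainC1C0 {i j : Fin n} (hij : i ≠ j) {x y}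
    (h1 : (Gn n).Adj (C i 1) x) (h2 : (Gn n).Adj x y) (h3 : (Gn n).Adj y (C j 0)) :
    x = C i 0 := by
  rw [adj_C1_iff] at h1
  rcases h1 with rfl | rfl
  · rfl
  · rw [adj_C2_iff] at h2
    rcases h2 with rfl | rfl
    · rw [adj_C1_iff] at h3
      rcases h3 with h | h
      · exact absurd h (by simp [C, hij.symm])
      · exact absurd h (by simp [C])
    · exact absurd h3 (nadjWC0 j)

lemma chainC1C2 {i j : Fin n} (hij : i ≠ j) {x y}
    (h1 : (Gn n).Adj (C i 1) x) (h2 : (Gn n).Adj x y) (h3 : (Gn n).Adj y (C j 2)) :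
    x = C i 2 := by
  rw [adj_C1_iff] at h1
  rcases h1 with rfl | rfl
  · rw [adj_C0_iff] at h2
    rcases h2 with rfl | rfl
    · exact absurd h3 (nadjUC2 j)
    · exact absurd h3 (nadjC1C2' hij)
  · rfl

lemma chainC1C1 {i j : Fin n} (hij : i ≠ j) {x y z}
    (h1 : (Gn n).Adj (C i 1) x) (h2 : (Gn n).Adj x y) (h3 : (Gn n).Adj y z)
    (h4 : (Gn n).Adj z (C j 1)) :
    (x = C i 0 ∧ y = U ∧ z = C j 0) ∨ (x = C i 2 ∧ y = W ∧ z = C j 2) := by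
  rw [adj_C1_iff] at h1
  rcases h1 with rfl | rfl
  · rw [adj_C0_iff] at h2
    rcases h2 with rfl | rfl
    · -- y = U
      rw [adj_U_iff] at h3
      rcases h3 with rfl | ⟨k, rfl⟩
      · exact absurd h4 (nadjWC1 j)
      · rw [adj_C0_iff] at h4
        rcases h4 with h | h
        · exact absurd h (by simp [C, U])
        · obtain rfl : k = j := by simpa [C] using h.symm
          exact Or.inl ⟨rfl, rfl, rfl⟩
    · -- y = C i 1
      rw [adj_C1_iff] at h3
      rcases h3 with rfl | rfl
      · exact absurd h4 (by rw [adj_C0_iff]; simp [C, U, hij.symm])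
      · exact absurd h4 (nadjC2C1 hij)
  · rw [adj_C2_iff] at h2
    rcases h2 with rfl | rfl
    · -- y = C i 1
      rw [adj_C1_iff] at h3
      rcases h3 with rfl | rfl
      · exact absurd h4 (by rw [adj_C0_iff]; simp [C, U, hij.symm])
      · exact absurd h4 (nadjC2C1 hij)
    · -- y = W
      rw [adj_W_iff] at h3
      rcases h3 with rfl | ⟨k, rfl⟩
      · exact absurd h4 (nadjUC1 j)
      · rw [adj_C2_iff] at h4
        rcases h4 with h | h
        · obtain rfl : k = j := by simpa [C] using h.symm
          exact Or.inr ⟨rfl, rfl, rfl⟩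
        · exact absurd h (by simp [C, W])

-- blocking lemmas
variable {X : Set ((Fin n × Fin 3) ⊕ Fin 2)} {a b : (Fin n × Fin 3) ⊕ Fin 2}

lemma not_vis2 (hd : (Gn n).dist a b = 2)
    (hm : ∀ x, (Gn n).Adj a x → (Gn n).Adj x b → x ∈ X) : ¬ XVisible (Gn n) X a b := by
  rintro ⟨p, hl, hc⟩
  rw [hd] at hl
  obtain ⟨x, h1, h2, hs⟩ := walk_len2 p hl
  exact hc x (by rw [hs]; simp) h1.ne' h2.ne (hm x h1 h2)

lemma not_vis3 (hd : (Gn n).dist a b = 3)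
    (hm : ∀ x y, (Gn n).Adj a x → (Gn n).Adj x y → (Gn n).Adj y b → x ∈ X ∨ y ∈ X) :
    ¬ XVisible (Gn n) X a b := by
  have hadj : ¬ (Gn n).Adj a b := fun h => by
    have := SimpleGraph.dist_eq_one_iff_adj.mpr h; omega
  rintro ⟨p, hl, hc⟩
  rw [hd] at hl
  obtain ⟨x, y, h1, h2, h3, hs⟩ := walk_len3 p hl
  have hxb : x ≠ b := fun e => hadj (e ▸ h1)
  have hya : y ≠ a := fun e => hadj (e ▸ h3)
  rcases hm x y h1 h2 h3 with hX | hX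
  · exact hc x (by rw [hs]; simp) h1.ne' hxb hX
  · exact hc y (by rw [hs]; simp) hya h3.ne hX

lemma not_vis4 (hd : (Gn n).dist a b = 4)
    (hm : ∀ x y z, (Gn n).Adj a x → (Gn n).Adj x y → (Gn n).Adj y z → (Gn n).Adj z b →
      x ∈ X ∨ (y ∈ X ∧ y ≠ a ∧ y ≠ b) ∨ z ∈ X) :
    ¬ XVisible (Gn n) X a b := by
  have hadj : ¬ (Gn n).Adj a b := fun h => by
    have := SimpleGraph.dist_eq_one_iff_adj.mpr h; omega
  rintro ⟨p, hl, hc⟩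
  rw [hd] at hl
  obtain ⟨x, y, z, h1, h2, h3, h4, hs⟩ := walk_len4 p hl
  have hxb : x ≠ b := fun e => hadj (e ▸ h1)
  have hza : z ≠ a := fun e => hadj (e ▸ h4)
  rcases hm x y z h1 h2 h3 h4 with hX | ⟨hX, hya, hyb⟩ | hX
  · exact hc x (by rw [hs]; simp) h1.ne' hxb hX
  · exact hc y (by rw [hs]; simp) hya hyb hX
  · exact hc z (by rw [hs]; simp) hza h4.ne hX

end Aux3
namespace Aux4
open SimpleGraph Aux Aux2 Aux3
variable {n : ℕ}

lemma lower (hn : 2 ≤ n) :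
    ∃ X : Set ((Fin n × Fin 3) ⊕ Fin 2), DualVis (Gn n) X ∧ X.ncard = 2 := by
  have i0 : Fin n := ⟨0, by omega⟩
  set Y : Set ((Fin n × Fin 3) ⊕ Fin 2) := {C i0 0, C i0 1} with hY
  have hUY : (U : (Fin n × Fin 3) ⊕ Fin 2) ∉ Y := by simp [hY, U, C]
  have hWY : (W : (Fin n × Fin 3) ⊕ Fin 2) ∉ Y := by simp [hY, W, C]
  have hC2Y : ∀ i : Fin n, C i 2 ∉ Y := by intro i; simp [hY, C]
  have hC0Y : ∀ i : Fin n, i ≠ i0 → C i 0 ∉ Y := by intro i h; simp [hY, C, h]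
  have hC0ne : ∀ i : Fin n, C i 0 ∉ Y → i ≠ i0 := by
    intro i h he; exact h (by simp [hY, C, he])
  have hC1ne : ∀ i : Fin n, C i 1 ∉ Y → i ≠ i0 := by
    intro i h he; exact h (by simp [hY, C, he])
  -- the key: any two vertices outside Y are visible
  have main : ∀ a b : (Fin n × Fin 3) ⊕ Fin 2, a ∉ Y → b ∉ Y → XVisible (Gn n) Y a b := by
    have half : ∀ (t : Fin 2) (b : (Fin n × Fin 3) ⊕ Fin 2), b ∉ Y →
        XVisible (Gn n) Y (Sum.inr t) b := by
      intro t b hb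
      fin_cases t
      · -- a = U
        rcases b with ⟨j, l⟩ | s
        · fin_cases l
          · exact vis1 (adjUC0 j)
          · exact vis2 (dUC1 j) (adjUC0 j) (adjC0C1 j) (hC0Y j (hC1ne j hb))
          · exact vis2 (dUC2 j) adjUW (adjWC2 j) hWY
        · fin_cases s
          · exact vis_self _
          · exact vis1 adjUW
      · -- a = W
        rcases b with ⟨j, l⟩ | s
        · fin_cases l
          · exact vis2 (dWC0 j) adjUW.symm (adjUC0 j) hUY
          · exact vis2 (dWC1 j) (adjWC2 j) (adjC1C2 j).symm (hC2Y j)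
          · exact vis1 (adjWC2 j)
        · fin_cases s
          · exact vis1 adjUW.symm
          · exact vis_self _
    intro a b ha hb
    rcases a with ⟨i, k⟩ | t
    · rcases b with ⟨j, l⟩ | s
      · -- C i k vs C j l
        rcases eq_or_ne i j with rfl | hij
        · fin_cases k <;> fin_cases l
          · exact vis_self _
          · exact vis1 (adjC0C1 i)
          · exact vis2 (dC0C2 i) (adjC0C1 i) (adjC1C2 i)
              (by simp [hY, C, hC0ne i ha])
          · exact vis1 (adjC0C1 i).symm
          · exact vis_self _
          · exact vis1 (adjC1C2 i)
          · exact vis_symm (vis2 (dC0C2 i) (adjC0C1 i) (adjC1C2 i)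
              (by simp [hY, C, hC0ne i hb]))
          · exact vis1 (adjC1C2 i).symm
          · exact vis_self _
        · fin_cases k <;> fin_cases l
          · exact vis2 (dC0C0 hij) (adjUC0 i).symm (adjUC0 j) hUY
          · exact vis3 (dC0C1 hij) (adjUC0 i).symm (adjUC0 j) (adjC0C1 j)
              hUY (hC0Y j (hC1ne j hb))
          · exact vis3 (dC0C2' hij) (adjUC0 i).symm adjUW (adjWC2 j) hUY hWY
          · exact vis3 (dC1C0 hij) (adjC0C1 i).symm (adjUC0 i).symm (adjUC0 j)
              (hC0Y i (hC1ne i ha)) hUY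
          · exact vis4 (dC1C1 hij) (adjC1C2 i) (adjC2W i) (adjWC2 j) (adjC1C2 j).symm
              (hC2Y i) hWY (hC2Y j)
          · exact vis3 (dC1C2 hij) (adjC1C2 i) (adjC2W i) (adjWC2 j) (hC2Y i) hWY
          · exact vis3 (dC2C0 hij) (adjC2W i) adjUW.symm (adjUC0 j) hWY hUY
          · exact vis3 (dC2C1 hij) (adjC2W i) (adjWC2 j) (adjC1C2 j).symm hWY (hC2Y j)
          · exact vis2 (dC2C2 hij) (adjC2W i) (adjWC2 j) hWY
      · exact vis_symm (half s _ ha)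
    · exact half t b hb
  refine ⟨Y, ⟨?_, fun a ha b hb => main a b ha hb⟩, ?_⟩
  · -- mutual visibility
    intro a ha b hb
    simp only [hY, Set.mem_insert_iff, Set.mem_singleton_iff] at ha hb
    rcases ha with rfl | rfl <;> rcases hb with rfl | rfl
    · exact vis_self _
    · exact vis1 (adjC0C1 i0)
    · exact vis1 (adjC0C1 i0).symm
    · exact vis_self _
  · rw [hY]
    rw [Set.ncard_pair (by simp [C])]

lemma upper {X : Set ((Fin n × Fin 3) ⊕ Fin 2)} (hn : 2 ≤ n)
    (hD : DualVis (Gn n) X) : X.ncard ≤ 2 := by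
  obtain ⟨hM, hC⟩ := hD
  have i0 : Fin n := ⟨0, by omega⟩
  have i1 : Fin n := ⟨1, by omega⟩
  have hne01 : (⟨0, by omega⟩ : Fin n) ≠ ⟨1, by omega⟩ := by simp [Fin.ext_iff]
  -- u ∉ X
  have hU : (U : (Fin n × Fin 3) ⊕ Fin 2) ∉ X := by
    intro hu
    by_cases hw : (W : (Fin n × Fin 3) ⊕ Fin 2) ∈ X
    · have h1 : ∀ i : Fin n, C i 1 ∉ X := by
        intro i hi
        have hC0 : C i 0 ∉ X := by
          obtain ⟨p, hl, hc⟩ := hM hu hi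
          rw [dUC1 i] at hl
          obtain ⟨x, hx1, hx2, hs⟩ := walk_len2 p hl
          obtain rfl := midUC1 hx1 hx2
          exact hc _ (by rw [hs]; simp) hx1.ne' hx2.ne
        have hC2 : C i 2 ∉ X := by
          obtain ⟨p, hl, hc⟩ := hM hw hi
          rw [dWC1 i] at hl
          obtain ⟨x, hx1, hx2, hs⟩ := walk_len2 p hl
          obtain rfl := midWC1 hx1 hx2
          exact hc _ (by rw [hs]; simp) hx1.ne' hx2.ne
        exact not_vis2 (dC0C2 i) (fun x a b => by rw [midC0C2 a b]; exact hi)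
          (hC hC0 hC2)
      refine not_vis4 (dC1C1 hne01) ?_ (hC (h1 _) (h1 _))
      intro x y z a b c d
      rcases chainC1C1 hne01 a b c d with ⟨_, rfl, _⟩ | ⟨_, rfl, _⟩
      · exact Or.inr (Or.inl ⟨hu, (neUC _ 1).symm.symm, by simp [U, C]⟩)
      · exact Or.inr (Or.inl ⟨hw, by simp [W, C], by simp [W, C]⟩)
    · have h0 : ∀ i : Fin n, C i 0 ∈ X := by
        intro i; by_contra h
        exact not_vis2 (dWC0 i) (fun x a b => by rw [midWC0 a b]; exact hu) (hC hw h)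
      exact not_vis2 (dC0C0 hne01) (fun x a b => by rw [midC0C0 hne01 a b]; exact hu)
        (hM (h0 _) (h0 _))
  have hW : (W : (Fin n × Fin 3) ⊕ Fin 2) ∉ X := by
    intro hw
    have h2 : ∀ i : Fin n, C i 2 ∈ X := by
      intro i; by_contra h
      exact not_vis2 (dUC2 i) (fun x a b => by rw [midUC2 a b]; exact hw) (hC hU h)
    exact not_vis2 (dC2C2 hne01) (fun x a b => by rw [midC2C2 hne01 a b]; exact hw)
      (hM (h2 _) (h2 _))
  have h01 : ∀ i : Fin n, C i 0 ∈ X → C i 1 ∈ X := by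
    intro i h0; by_contra h1
    exact not_vis2 (dUC1 i) (fun x a b => by rw [midUC1 a b]; exact h0) (hC hU h1)
  have h21 : ∀ i : Fin n, C i 2 ∈ X → C i 1 ∈ X := by
    intro i h2; by_contra h1
    exact not_vis2 (dWC1 i) (fun x a b => by rw [midWC1 a b]; exact h2) (hC hW h1)
  have hnot02 : ∀ i : Fin n, ¬(C i 0 ∈ X ∧ C i 2 ∈ X) := by
    rintro i ⟨h0, h2⟩
    exact not_vis2 (dC0C2 i) (fun x a b => by rw [midC0C2 a b]; exact h01 i h0)
      (hM h0 h2)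
  have h1or : ∀ i : Fin n, C i 1 ∈ X → C i 0 ∈ X ∨ C i 2 ∈ X := by
    intro i h1; by_contra h; push_neg at h
    exact not_vis2 (dC0C2 i) (fun x a b => by rw [midC0C2 a b]; exact h1)
      (hC h.1 h.2)
  have honecycle : ∀ i j : Fin n, C i 1 ∈ X → C j 1 ∈ X → i = j := by
    intro i j hi hj; by_contra hij
    rcases h1or i hi with hi' | hi' <;> rcases h1or j hj with hj' | hj'
    · exact not_vis3 (dC1C0 hij)
        (fun x y a b c => Or.inl (by rw [chainC1C0 hij a b c]; exact hi')) (hM hi hj')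
    · refine not_vis4 (dC1C1 hij) ?_ (hM hi hj)
      intro x y z a b c d
      rcases chainC1C1 hij a b c d with ⟨rfl, _, _⟩ | ⟨_, _, rfl⟩
      · exact Or.inl hi'
      · exact Or.inr (Or.inr hj')
    · refine not_vis4 (dC1C1 hij) ?_ (hM hi hj)
      intro x y z a b c d
      rcases chainC1C1 hij a b c d with ⟨_, _, rfl⟩ | ⟨rfl, _, _⟩
      · exact Or.inr (Or.inr hj')
      · exact Or.inl hi'
    · exact not_vis3 (dC1C2 hij)
        (fun x y a b c => Or.inl (by rw [chainC1C2 hij a b c]; exact hi')) (hM hi hj')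
  -- conclude
  rcases Set.eq_empty_or_nonempty X with rfl | ⟨x0, hx0⟩
  · simp
  have key : ∀ x ∈ X, ∃ i : Fin n, ∃ k : Fin 3, x = C i k ∧ C i 1 ∈ X := by
    intro x hx
    rcases x with ⟨i, k⟩ | t
    · fin_cases k
      · exact ⟨i, 0, rfl, h01 i hx⟩
      · exact ⟨i, 1, rfl, hx⟩
      · exact ⟨i, 2, rfl, h21 i hx⟩
    · fin_cases t
      · exact absurd hx hU
      · exact absurd hx hW
  obtain ⟨j0, k0, _, hj0⟩ := key x0 hx0
  have hsub : ∀ x ∈ X, x = C j0 0 ∨ x = C j0 1 ∨ x = C j0 2 := by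
    intro x hx
    obtain ⟨i, k, rfl, hi⟩ := key x hx
    obtain rfl : i = j0 := honecycle _ _ hi hj0
    fin_cases k
    · exact Or.inl rfl
    · exact Or.inr (Or.inl rfl)
    · exact Or.inr (Or.inr rfl)
  by_cases h0 : C j0 0 ∈ X
  · have h2 : C j0 2 ∉ X := fun h => hnot02 j0 ⟨h0, h⟩
    have hss : X ⊆ {C j0 0, C j0 1} := by
      intro x hx
      rcases hsub x hx with rfl | rfl | rfl
      · exact Or.inl rfl
      · exact Or.inr rfl
      · exact absurd hx h2
    calc X.ncard ≤ ({C j0 0, C j0 1} : Set _).ncard :=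
          Set.ncard_le_ncard hss (Set.toFinite _)
      _ ≤ 2 := (Set.ncard_insert_le _ _).trans (by simp)
  · have hss : X ⊆ {C j0 1, C j0 2} := by
      intro x hx
      rcases hsub x hx with rfl | rfl | rfl
      · exact absurd hx h0
      · exact Or.inl rfl
      · exact Or.inr rfl
    calc X.ncard ≤ ({C j0 1, C j0 2} : Set _).ncard :=
          Set.ncard_le_ncard hss (Set.toFinite _)
      _ ≤ 2 := (Set.ncard_insert_le _ _).trans (by simp)

end Aux4


theorem stmt_7 (n : ℕ) (hn : 2 ≤ n) :
    (∃ X : Set ((Fin n × Fin 3) ⊕ Fin 2), DualVis (Gn n) X ∧ X.ncard = 2) ∧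
    (∀ X : Set ((Fin n × Fin 3) ⊕ Fin 2), DualVis (Gn n) X → X.ncard ≤ 2) :=
  ⟨Aux4.lower hn, fun _ hX => Aux4.upper hn hX⟩
end

section
/- For n ≥ 3, a subset X of the vertices of the complete bipartite graph K_{n,n} with parts A and B is a mutual-visibility set if and only if one of the following holds: (a) |X∩A| ≤ n−1 and |X∩B| ≤ n−1; (b) X = A or X = B; (c) A ⊆ X and |X∩B| = 1; (d) B ⊆ X and |X∩A| = 1. In particular μ(K_{n,n}) = 2n−2. -/
open SimpleGraph

variable {V : Type*}

namespace Stmt9Aux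

variable {n : ℕ}

abbrev KB (n : ℕ) : SimpleGraph (Fin n ⊕ Fin n) := completeBipartiteGraph (Fin n) (Fin n)

lemma adj_lr (a b : Fin n) : (KB n).Adj (Sum.inl a) (Sum.inr b) := by simp

lemma vis_self (G : SimpleGraph V) (X : Set V) (u : V) : XVisible G X u u := by
  refine ⟨Walk.nil, by simp [SimpleGraph.dist_self], ?_⟩
  intro w hw hne _
  simp only [Walk.support_nil, List.mem_singleton] at hw
  exact absurd hw hne

lemma vis_adj {G : SimpleGraph V} (X : Set V) {u v : V} (h : G.Adj u v) : XVisible G X u v := by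
  refine ⟨Walk.cons h Walk.nil, by simp [SimpleGraph.dist_eq_one_iff_adj.mpr h], ?_⟩
  intro w hw hne hne'
  simp only [Walk.support_cons, Walk.support_nil, List.mem_cons, List.mem_singleton] at hw
  rcases hw with h1 | h1 | h1 <;> simp_all

lemma exists_notin_of_vis {X : Set (Fin n ⊕ Fin n)} {a a' : Fin n} (ha : a ≠ a')
    (h : XVisible (KB n) X (Sum.inl a) (Sum.inl a')) : ∃ b, Sum.inr b ∉ X := by
  obtain ⟨p, -, hint⟩ := h
  cases p with
  | nil => exact absurd rfl ha
  | @cons _ v _ h q =>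
    match v with
    | Sum.inl c => simp at h
    | Sum.inr b =>
      refine ⟨b, hint _ ?_ (by simp) (by simp)⟩
      simp [Walk.support_cons, Walk.start_mem_support]

lemma two_le_length {a a' : Fin n} (ha : a ≠ a') (p : (KB n).Walk (Sum.inl a) (Sum.inl a')) :
    2 ≤ p.length := by
  cases p with
  | nil => exact absurd rfl ha
  | @cons _ v _ h q =>
    cases q with
    | nil => simp at h
    | cons h' q' => simp only [Walk.length_cons]; omega

lemma dist_AA (hn : 1 ≤ n) {a a' : Fin n} (ha : a ≠ a') :
    (KB n).dist (Sum.inl a) (Sum.inl a') = 2 := by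
  set b : Fin n := ⟨0, hn⟩
  set w : (KB n).Walk (Sum.inl a) (Sum.inl a') :=
    Walk.cons (adj_lr a b) (Walk.cons (adj_lr a' b).symm Walk.nil) with hw
  have h1 : (KB n).dist (Sum.inl a) (Sum.inl a') ≤ 2 := by
    simpa [hw] using SimpleGraph.dist_le w
  have hr : (KB n).Reachable (Sum.inl a) (Sum.inl a') := ⟨w⟩
  obtain ⟨p, hp⟩ := hr.exists_walk_length_eq_dist
  have := two_le_length ha p
  omega

lemma vis_AA (hn : 1 ≤ n) {X : Set (Fin n ⊕ Fin n)} {a a' : Fin n} (ha : a ≠ a') :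
    XVisible (KB n) X (Sum.inl a) (Sum.inl a') ↔ ∃ b, Sum.inr b ∉ X := by
  constructor
  · exact exists_notin_of_vis ha
  · rintro ⟨b, hb⟩
    refine ⟨Walk.cons (adj_lr a b) (Walk.cons (adj_lr a' b).symm Walk.nil),
      by simp [dist_AA hn ha], ?_⟩
    intro w hw hne hne'
    simp only [Walk.support_cons, Walk.support_nil, List.mem_cons,
      List.not_mem_nil, or_false] at hw
    rcases hw with h1 | h1 | h1
    · exact absurd h1 hne
    · simpa [h1] using hb
    · exact absurd h1 hne'


lemma exists_notin_of_vis' {X : Set (Fin n ⊕ Fin n)} {b b' : Fin n} (hb : b ≠ b')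
    (h : XVisible (KB n) X (Sum.inr b) (Sum.inr b')) : ∃ a, Sum.inl a ∉ X := by
  obtain ⟨p, -, hint⟩ := h
  cases p with
  | nil => exact absurd rfl hb
  | @cons _ v _ h q =>
    match v with
    | Sum.inr c => simp at h
    | Sum.inl a =>
      refine ⟨a, hint _ ?_ (by simp) (by simp)⟩
      simp [Walk.support_cons, Walk.start_mem_support]

lemma two_le_length' {b b' : Fin n} (hb : b ≠ b') (p : (KB n).Walk (Sum.inr b) (Sum.inr b')) :
    2 ≤ p.length := by
  cases p with
  | nil => exact absurd rfl hb
  | @cons _ v _ h q =>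
    cases q with
    | nil => simp at h
    | cons h' q' => simp only [Walk.length_cons]; omega

lemma dist_BB (hn : 1 ≤ n) {b b' : Fin n} (hb : b ≠ b') :
    (KB n).dist (Sum.inr b) (Sum.inr b') = 2 := by
  set a : Fin n := ⟨0, hn⟩
  set w : (KB n).Walk (Sum.inr b) (Sum.inr b') :=
    Walk.cons (adj_lr a b).symm (Walk.cons (adj_lr a b') Walk.nil) with hw
  have h1 : (KB n).dist (Sum.inr b) (Sum.inr b') ≤ 2 := by
    simpa [hw] using SimpleGraph.dist_le w
  have hr : (KB n).Reachable (Sum.inr b) (Sum.inr b') := ⟨w⟩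
  obtain ⟨p, hp⟩ := hr.exists_walk_length_eq_dist
  have := two_le_length' hb p
  omega

lemma vis_BB (hn : 1 ≤ n) {X : Set (Fin n ⊕ Fin n)} {b b' : Fin n} (hb : b ≠ b') :
    XVisible (KB n) X (Sum.inr b) (Sum.inr b') ↔ ∃ a, Sum.inl a ∉ X := by
  constructor
  · exact exists_notin_of_vis' hb
  · rintro ⟨a, ha⟩
    refine ⟨Walk.cons (adj_lr a b).symm (Walk.cons (adj_lr a b') Walk.nil),
      by simp [dist_BB hn hb], ?_⟩
    intro w hw hne hne'
    simp only [Walk.support_cons, Walk.support_nil, List.mem_cons,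
      List.not_mem_nil, or_false] at hw
    rcases hw with h1 | h1 | h1
    · exact absurd h1 hne
    · simpa [h1] using ha
    · exact absurd h1 hne'

lemma ncard_range_inl : (Set.range (Sum.inl : Fin n → Fin n ⊕ Fin n)).ncard = n := by
  rw [← Set.image_univ, Set.ncard_image_of_injective _ Sum.inl_injective, Set.ncard_univ]
  simp

lemma ncard_range_inr : (Set.range (Sum.inr : Fin n → Fin n ⊕ Fin n)).ncard = n := by
  rw [← Set.image_univ, Set.ncard_image_of_injective _ Sum.inr_injective, Set.ncard_univ]
  simp

lemma cA_le (X : Set (Fin n ⊕ Fin n)) : (X ∩ Set.range Sum.inl).ncard ≤ n :=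
  le_trans (Set.ncard_le_ncard Set.inter_subset_right (Set.toFinite _)) (le_of_eq ncard_range_inl)

lemma cB_le (X : Set (Fin n ⊕ Fin n)) : (X ∩ Set.range Sum.inr).ncard ≤ n :=
  le_trans (Set.ncard_le_ncard Set.inter_subset_right (Set.toFinite _)) (le_of_eq ncard_range_inr)

lemma subA_iff (X : Set (Fin n ⊕ Fin n)) :
    Set.range Sum.inl ⊆ X ↔ (X ∩ Set.range Sum.inl).ncard = n := by
  constructor
  · intro h
    rw [Set.inter_eq_right.mpr h, ncard_range_inl]
  · intro h
    have hsub : X ∩ Set.range Sum.inl ⊆ Set.range Sum.inl := Set.inter_subset_right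
    have heq := Set.eq_of_subset_of_ncard_le hsub
      (by rw [h, ncard_range_inl]) (Set.toFinite _)
    rw [← heq]
    exact Set.inter_subset_left
  

lemma subB_iff (X : Set (Fin n ⊕ Fin n)) :
    Set.range Sum.inr ⊆ X ↔ (X ∩ Set.range Sum.inr).ncard = n := by
  constructor
  · intro h
    rw [Set.inter_eq_right.mpr h, ncard_range_inr]
  · intro h
    have hsub : X ∩ Set.range Sum.inr ⊆ Set.range Sum.inr := Set.inter_subset_right
    have heq := Set.eq_of_subset_of_ncard_le hsub
      (by rw [h, ncard_range_inr]) (Set.toFinite _)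
    rw [← heq]
    exact Set.inter_subset_left

lemma notsubB_iff (X : Set (Fin n ⊕ Fin n)) :
    (∃ b, Sum.inr b ∉ X) ↔ (X ∩ Set.range Sum.inr).ncard < n := by
  constructor
  · rintro ⟨b, hb⟩
    rcases lt_or_eq_of_le (cB_le X) with h | h
    · exact h
    · exact absurd (((subB_iff X).mpr h) ⟨b, rfl⟩) hb
  · intro h
    by_contra hc
    push_neg at hc
    have : Set.range Sum.inr ⊆ X := Set.range_subset_iff.mpr hc
    rw [(subB_iff X).mp this] at h
    omega

lemma notsubA_iff (X : Set (Fin n ⊕ Fin n)) :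
    (∃ a, Sum.inl a ∉ X) ↔ (X ∩ Set.range Sum.inl).ncard < n := by
  constructor
  · rintro ⟨a, ha⟩
    rcases lt_or_eq_of_le (cA_le X) with h | h
    · exact h
    · exact absurd (((subA_iff X).mpr h) ⟨a, rfl⟩) ha
  · intro h
    by_contra hc
    push_neg at hc
    have : Set.range Sum.inl ⊆ X := Set.range_subset_iff.mpr hc
    rw [(subA_iff X).mp this] at h
    omega

lemma pairA_iff (X : Set (Fin n ⊕ Fin n)) :
    1 < (X ∩ Set.range Sum.inl).ncard ↔
      ∃ a a' : Fin n, a ≠ a' ∧ Sum.inl a ∈ X ∧ Sum.inl a' ∈ X := by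
  rw [Set.one_lt_ncard_iff (Set.toFinite _)]
  constructor
  · rintro ⟨x, y, ⟨hx, a, rfl⟩, ⟨hy, a', rfl⟩, hxy⟩
    exact ⟨a, a', fun h => hxy (by rw [h]), hx, hy⟩
  · rintro ⟨a, a', hne, hx, hy⟩
    exact ⟨Sum.inl a, Sum.inl a', ⟨hx, a, rfl⟩, ⟨hy, a', rfl⟩, by simpa using hne⟩

lemma pairB_iff (X : Set (Fin n ⊕ Fin n)) :
    1 < (X ∩ Set.range Sum.inr).ncard ↔
      ∃ b b' : Fin n, b ≠ b' ∧ Sum.inr b ∈ X ∧ Sum.inr b' ∈ X := by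
  rw [Set.one_lt_ncard_iff (Set.toFinite _)]
  constructor
  · rintro ⟨x, y, ⟨hx, b, rfl⟩, ⟨hy, b', rfl⟩, hxy⟩
    exact ⟨b, b', fun h => hxy (by rw [h]), hx, hy⟩
  · rintro ⟨b, b', hne, hx, hy⟩
    exact ⟨Sum.inr b, Sum.inr b', ⟨hx, b, rfl⟩, ⟨hy, b', rfl⟩, by simpa using hne⟩

lemma mv_iff_card (hn : 1 ≤ n) (X : Set (Fin n ⊕ Fin n)) :
    MutualVis (KB n) X ↔
      ((1 < (X ∩ Set.range Sum.inl).ncard → (X ∩ Set.range Sum.inr).ncard < n) ∧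
       (1 < (X ∩ Set.range Sum.inr).ncard → (X ∩ Set.range Sum.inl).ncard < n)) := by
  constructor
  · intro h
    constructor
    · intro h1
      obtain ⟨a, a', ha, hx, hx'⟩ := (pairA_iff X).mp h1
      exact (notsubB_iff X).mp (exists_notin_of_vis ha (h hx hx'))
    · intro h1
      obtain ⟨b, b', hb, hx, hx'⟩ := (pairB_iff X).mp h1
      exact (notsubA_iff X).mp (exists_notin_of_vis' hb (h hx hx'))
  · rintro ⟨h1, h2⟩ u hu v hv
    match u, v with
    | Sum.inl a, Sum.inl a' =>
      rcases eq_or_ne a a' with rfl | hne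
      · exact vis_self _ _ _
      · refine (vis_AA hn hne).mpr ?_
        exact (notsubB_iff X).mpr (h1 ((pairA_iff X).mpr ⟨a, a', hne, hu, hv⟩))
    | Sum.inl a, Sum.inr b => exact vis_adj X (adj_lr a b)
    | Sum.inr b, Sum.inl a => exact vis_adj X (adj_lr a b).symm
    | Sum.inr b, Sum.inr b' =>
      rcases eq_or_ne b b' with rfl | hne
      · exact vis_self _ _ _
      · refine (vis_BB hn hne).mpr ?_
        exact (notsubA_iff X).mpr (h2 ((pairB_iff X).mpr ⟨b, b', hne, hu, hv⟩))

lemma ncard_split (X : Set (Fin n ⊕ Fin n)) :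
    X.ncard = (X ∩ Set.range Sum.inl).ncard + (X ∩ Set.range Sum.inr).ncard := by
  rw [← Set.ncard_union_eq
      (Set.disjoint_of_subset Set.inter_subset_right Set.inter_subset_right
        Set.isCompl_range_inl_range_inr.disjoint)
      (Set.toFinite _) (Set.toFinite _),
    ← Set.inter_union_distrib_left, Set.range_inl_union_range_inr, Set.inter_univ]

lemma eqA_iff (hn : 1 ≤ n) (X : Set (Fin n ⊕ Fin n)) :
    X = Set.range Sum.inl ↔
      (X ∩ Set.range Sum.inl).ncard = n ∧ (X ∩ Set.range Sum.inr).ncard = 0 := by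
  constructor
  · rintro rfl
    rw [Set.inter_self, ncard_range_inl, Set.range_inl_inter_range_inr]
    simp
  · rintro ⟨h1, h2⟩
    have hA : Set.range Sum.inl ⊆ X := (subA_iff X).mpr h1
    have hB : X ∩ Set.range Sum.inr = ∅ := (Set.ncard_eq_zero (Set.toFinite _)).mp h2
    refine Set.Subset.antisymm ?_ hA
    rintro (a | b) hx
    · exact ⟨a, rfl⟩
    · exact absurd (⟨hx, b, rfl⟩ : Sum.inr b ∈ X ∩ Set.range Sum.inr) (Set.eq_empty_iff_forall_notMem.mp hB _)

lemma eqB_iff (hn : 1 ≤ n) (X : Set (Fin n ⊕ Fin n)) :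
    X = Set.range Sum.inr ↔
      (X ∩ Set.range Sum.inr).ncard = n ∧ (X ∩ Set.range Sum.inl).ncard = 0 := by
  constructor
  · rintro rfl
    rw [Set.inter_self, ncard_range_inr, Set.range_inr_inter_range_inl]
    simp
  · rintro ⟨h1, h2⟩
    have hB : Set.range Sum.inr ⊆ X := (subB_iff X).mpr h1
    have hA : X ∩ Set.range Sum.inl = ∅ := (Set.ncard_eq_zero (Set.toFinite _)).mp h2
    refine Set.Subset.antisymm ?_ hB
    rintro (a | b) hx
    · exact absurd (⟨hx, a, rfl⟩ : Sum.inl a ∈ X ∩ Set.range Sum.inl) (Set.eq_empty_iff_forall_notMem.mp hA _)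
    · exact ⟨b, rfl⟩

end Stmt9Aux

theorem stmt_9 (n : ℕ) (hn : 3 ≤ n) :
    (∀ X : Set (Fin n ⊕ Fin n),
      MutualVis (completeBipartiteGraph (Fin n) (Fin n)) X ↔
        ((X ∩ Set.range Sum.inl).ncard ≤ n - 1 ∧
            (X ∩ Set.range Sum.inr).ncard ≤ n - 1) ∨
          (X = Set.range Sum.inl ∨ X = Set.range Sum.inr) ∨
          (Set.range Sum.inl ⊆ X ∧ (X ∩ Set.range Sum.inr).ncard = 1) ∨
          (Set.range Sum.inr ⊆ X ∧ (X ∩ Set.range Sum.inl).ncard = 1)) ∧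
    (∃ X : Set (Fin n ⊕ Fin n),
      MutualVis (completeBipartiteGraph (Fin n) (Fin n)) X ∧
        X.ncard = 2 * n - 2) ∧
    (∀ X : Set (Fin n ⊕ Fin n),
      MutualVis (completeBipartiteGraph (Fin n) (Fin n)) X →
        X.ncard ≤ 2 * n - 2) := by
  have hn1 : 1 ≤ n := by omega
  refine ⟨?_, ?_, ?_⟩
  · intro X
    rw [Stmt9Aux.mv_iff_card hn1 X, Stmt9Aux.eqA_iff hn1 X, Stmt9Aux.eqB_iff hn1 X,
      Stmt9Aux.subA_iff X, Stmt9Aux.subB_iff X]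
    have h1 := Stmt9Aux.cA_le X
    have h2 := Stmt9Aux.cB_le X
    omega
  · set z : Fin n := ⟨0, by omega⟩ with hz
    refine ⟨({Sum.inl z, Sum.inr z} : Set (Fin n ⊕ Fin n))ᶜ, ?_, ?_⟩ <;>
    · have hA : ({Sum.inl z, Sum.inr z} : Set (Fin n ⊕ Fin n))ᶜ ∩ Set.range Sum.inl =
          Set.range Sum.inl \ {Sum.inl z} := by
        ext x
        cases x <;> simp <;> tauto
      have hB : ({Sum.inl z, Sum.inr z} : Set (Fin n ⊕ Fin n))ᶜ ∩ Set.range Sum.inr =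
          Set.range Sum.inr \ {Sum.inr z} := by
        ext x
        cases x <;> simp <;> tauto
      have hcA : (({Sum.inl z, Sum.inr z} : Set (Fin n ⊕ Fin n))ᶜ ∩
          Set.range Sum.inl).ncard = n - 1 := by
        rw [hA, Set.ncard_diff_singleton_of_mem (Set.mem_range_self z),
          Stmt9Aux.ncard_range_inl]
      have hcB : (({Sum.inl z, Sum.inr z} : Set (Fin n ⊕ Fin n))ᶜ ∩
          Set.range Sum.inr).ncard = n - 1 := by
        rw [hB, Set.ncard_diff_singleton_of_mem (Set.mem_range_self z),
          Stmt9Aux.ncard_range_inr]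
      first
      | · rw [Stmt9Aux.mv_iff_card hn1, hcA, hcB]
          omega
      | · rw [Stmt9Aux.ncard_split, hcA, hcB]
          omega
  · intro X hX
    rw [Stmt9Aux.mv_iff_card hn1 X] at hX
    have h1 := Stmt9Aux.cA_le X
    have h2 := Stmt9Aux.cB_le X
    have h3 := Stmt9Aux.ncard_split X
    omega
end

section
/- For n ≥ 3, a subset X of the vertices of K_{n,n} with parts A and B is a total mutual-visibility set if and only if |X∩A| ≤ n−1 and |X∩B| ≤ n−1; consequently the total mutual-visibility number of K_{n,n} equals 2n−2 and the number of total mutual-visibility sets of size i equals the coefficient of x^i in ((x+1)^n − x^n)^2. -/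
open SimpleGraph

variable {V : Type*}

section basics
variable {α β : Type*}

abbrev KG (α β : Type*) := completeBipartiteGraph α β

lemma xvis_self (G : SimpleGraph (α ⊕ β)) (X : Set (α ⊕ β)) (u : α ⊕ β) :
    XVisible G X u u :=
  ⟨Walk.nil, by simp [SimpleGraph.dist_self], by simp⟩

lemma xvis_adj {G : SimpleGraph (α ⊕ β)} (X : Set (α ⊕ β)) {u v : α ⊕ β}
    (h : G.Adj u v) : XVisible G X u v := by
  refine ⟨Walk.cons h Walk.nil, ?_, ?_⟩
  · simp [(SimpleGraph.dist_eq_one_iff_adj).mpr h]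
  · intro w hw hwu hwv
    simp [Walk.support_cons] at hw
    rcases hw with h1 | h1 <;> simp_all

lemma KG_adj_lr (a : α) (b : β) : (KG α β).Adj (Sum.inl a) (Sum.inr b) := by
  simp [KG]

lemma KG_not_adj_ll (a a' : α) : ¬ (KG α β).Adj (Sum.inl a) (Sum.inl a') := by
  simp [KG]

lemma KG_not_adj_rr (b b' : β) : ¬ (KG α β).Adj (Sum.inr b) (Sum.inr b') := by
  simp [KG]

end basics

section dists
variable {α β : Type*}

lemma KG_dist_ll [Nonempty β] {a a' : α} (h : a ≠ a') :
    (KG α β).dist (Sum.inl a) (Sum.inl a') = 2 := by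
  obtain ⟨b⟩ := ‹Nonempty β›
  have hne : (Sum.inl a : α ⊕ β) ≠ Sum.inl a' := by simp [h]
  let p : (KG α β).Walk (Sum.inl a) (Sum.inl a') :=
    Walk.cons (KG_adj_lr a b) (Walk.cons ((KG_adj_lr a' b).symm) Walk.nil)
  have h2 : (KG α β).dist (Sum.inl a) (Sum.inl a') ≤ 2 := by
    simpa [p] using SimpleGraph.dist_le p
  have h0 : (KG α β).dist (Sum.inl a) (Sum.inl a') ≠ 0 := by
    simp only [ne_eq, SimpleGraph.Reachable.dist_eq_zero_iff ⟨p⟩]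
    exact hne
  have h1 : (KG α β).dist (Sum.inl a) (Sum.inl a') ≠ 1 := by
    simp only [ne_eq, SimpleGraph.dist_eq_one_iff_adj]
    exact KG_not_adj_ll a a'
  omega

lemma xvis_ll {X : Set (α ⊕ β)} {a a' : α} {b : β} (hb : Sum.inr b ∉ X) (h : a ≠ a') :
    XVisible (KG α β) X (Sum.inl a) (Sum.inl a') := by
  have : Nonempty β := ⟨b⟩
  refine ⟨Walk.cons (KG_adj_lr a b) (Walk.cons ((KG_adj_lr a' b).symm) Walk.nil), ?_, ?_⟩
  · simp [KG_dist_ll h]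
  · intro w hw hwu hwv
    simp [Walk.support_cons] at hw
    rcases hw with h1 | h1 | h1 <;> simp_all

end dists

section fwd
variable {α β : Type*}

lemma exists_right_not_mem [Nonempty β] {X : Set (α ⊕ β)}
    (hX : TotalVis (KG α β) X) {a a' : α} (h : a ≠ a') :
    ∃ b : β, Sum.inr b ∉ X := by
  obtain ⟨p, hlen, hint⟩ := hX (Sum.inl a) (Sum.inl a')
  rw [KG_dist_ll h] at hlen
  have hadj : (KG α β).Adj (p.getVert 0) (p.getVert 1) :=
    p.adj_getVert_succ (by omega)
  rw [p.getVert_zero] at hadj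
  set w := p.getVert 1 with hw
  have hmem : w ∈ p.support :=
    Walk.mem_support_iff_exists_getVert.mpr ⟨1, rfl, by omega⟩
  match hwb : w with
  | Sum.inl x => exact absurd hadj (KG_not_adj_ll a x)
  | Sum.inr b => exact ⟨b, hint _ hmem (by simp) (by simp)⟩

end fwd

section mirror
variable {α β : Type*}

lemma KG_dist_rr [Nonempty α] {b b' : β} (h : b ≠ b') :
    (KG α β).dist (Sum.inr b) (Sum.inr b') = 2 := by
  obtain ⟨a⟩ := ‹Nonempty α›
  have hne : (Sum.inr b : α ⊕ β) ≠ Sum.inr b' := by simp [h]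
  let p : (KG α β).Walk (Sum.inr b) (Sum.inr b') :=
    Walk.cons ((KG_adj_lr a b).symm) (Walk.cons (KG_adj_lr a b') Walk.nil)
  have h2 : (KG α β).dist (Sum.inr b) (Sum.inr b') ≤ 2 := by
    simpa [p] using SimpleGraph.dist_le p
  have h0 : (KG α β).dist (Sum.inr b) (Sum.inr b') ≠ 0 := by
    simp only [ne_eq, SimpleGraph.Reachable.dist_eq_zero_iff ⟨p⟩]
    exact hne
  have h1 : (KG α β).dist (Sum.inr b) (Sum.inr b') ≠ 1 := by
    simp only [ne_eq, SimpleGraph.dist_eq_one_iff_adj]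
    exact KG_not_adj_rr b b'
  omega

lemma xvis_rr {X : Set (α ⊕ β)} {b b' : β} {a : α} (ha : Sum.inl a ∉ X) (h : b ≠ b') :
    XVisible (KG α β) X (Sum.inr b) (Sum.inr b') := by
  have : Nonempty α := ⟨a⟩
  refine ⟨Walk.cons ((KG_adj_lr a b).symm) (Walk.cons (KG_adj_lr a b') Walk.nil), ?_, ?_⟩
  · simp [KG_dist_rr h]
  · intro w hw hwu hwv
    simp [Walk.support_cons] at hw
    rcases hw with h1 | h1 | h1 <;> simp_all

lemma exists_left_not_mem [Nonempty α] {X : Set (α ⊕ β)}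
    (hX : TotalVis (KG α β) X) {b b' : β} (h : b ≠ b') :
    ∃ a : α, Sum.inl a ∉ X := by
  obtain ⟨p, hlen, hint⟩ := hX (Sum.inr b) (Sum.inr b')
  rw [KG_dist_rr h] at hlen
  have hadj : (KG α β).Adj (p.getVert 0) (p.getVert 1) :=
    p.adj_getVert_succ (by omega)
  rw [p.getVert_zero] at hadj
  have hmem : p.getVert 1 ∈ p.support :=
    Walk.mem_support_iff_exists_getVert.mpr ⟨1, rfl, by omega⟩
  match hwb : p.getVert 1, hadj, hmem with
  | Sum.inr x, hadj, _ => exact absurd hadj (KG_not_adj_rr b x)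
  | Sum.inl a, _, hmem => exact ⟨a, hint _ hmem (by simp) (by simp)⟩

lemma totalVis_iff [Nontrivial α] [Nontrivial β] {X : Set (α ⊕ β)} :
    TotalVis (KG α β) X ↔ (∃ a, Sum.inl a ∉ X) ∧ (∃ b, Sum.inr b ∉ X) := by
  constructor
  · intro hX
    obtain ⟨b, b', hb⟩ := exists_pair_ne β
    obtain ⟨a, a', ha⟩ := exists_pair_ne α
    exact ⟨exists_left_not_mem hX hb, exists_right_not_mem hX ha⟩
  · rintro ⟨⟨a, ha⟩, ⟨b, hb⟩⟩ u v
    match u, v with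
    | Sum.inl x, Sum.inl y =>
      rcases eq_or_ne x y with rfl | h
      · exact xvis_self _ _ _
      · exact xvis_ll hb h
    | Sum.inl x, Sum.inr y => exact xvis_adj _ (KG_adj_lr x y)
    | Sum.inr x, Sum.inl y => exact xvis_adj _ ((KG_adj_lr y x).symm)
    | Sum.inr x, Sum.inr y =>
      rcases eq_or_ne x y with rfl | h
      · exact xvis_self _ _ _
      · exact xvis_rr ha h

end mirror

section sets
variable {n : ℕ}

lemma inter_range_inl_ncard (X : Set (Fin n ⊕ Fin n)) :
    (X ∩ Set.range Sum.inl).ncard = (Sum.inl ⁻¹' X).ncard := by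
  rw [← Set.image_preimage_eq_inter_range,
    Set.ncard_image_of_injective _ Sum.inl_injective]

lemma inter_range_inr_ncard (X : Set (Fin n ⊕ Fin n)) :
    (X ∩ Set.range Sum.inr).ncard = (Sum.inr ⁻¹' X).ncard := by
  rw [← Set.image_preimage_eq_inter_range,
    Set.ncard_image_of_injective _ Sum.inr_injective]

lemma ncard_le_iff (hn : 1 ≤ n) (s : Set (Fin n)) :
    s.ncard ≤ n - 1 ↔ ∃ a, a ∉ s := by
  rw [← Set.ne_univ_iff_exists_notMem]
  constructor
  · intro h hs
    rw [hs, Set.ncard_univ, Nat.card_eq_fintype_card, Fintype.card_fin] at h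
    omega
  · intro h
    have := Set.ncard_lt_ncard (Set.ssubset_univ_iff.mpr h) Set.finite_univ
    rw [Set.ncard_univ, Nat.card_eq_fintype_card, Fintype.card_fin] at this
    omega

lemma ncard_split (X : Set (Fin n ⊕ Fin n)) :
    X.ncard = (X ∩ Set.range Sum.inl).ncard + (X ∩ Set.range Sum.inr).ncard := by
  rw [← Set.ncard_union_eq]
  · congr 1
    rw [← Set.inter_union_distrib_left, Set.range_inl_union_range_inr, Set.inter_univ]
  · exact Set.disjoint_of_subset Set.inter_subset_right Set.inter_subset_right
      (Set.disjoint_left.mpr (by rintro x ⟨a, rfl⟩ ⟨b, h⟩; exact Sum.inl_ne_inr h.symm))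

end sets

section counting
open Finset
variable {n : ℕ}

noncomputable def sumSetEquiv {α β : Type*} : Set (α ⊕ β) ≃ Set α × Set β where
  toFun X := (Sum.inl ⁻¹' X, Sum.inr ⁻¹' X)
  invFun p := Sum.inl '' p.1 ∪ Sum.inr '' p.2
  left_inv X := by ext (a | b) <;> simp
  right_inv p := by
    refine Prod.ext ?_ ?_ <;> ext x <;> simp

lemma countA (k : ℕ) :
    ((Finset.univ : Finset (Finset (Fin n))).filter
      (fun s => s ≠ Finset.univ ∧ s.card = k)).card =
      if k = n then 0 else n.choose k := by
  split_ifs with h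
  · subst h
    rw [Finset.card_eq_zero, Finset.filter_eq_empty_iff]
    intro s _
    rintro ⟨hne, hcard⟩
    exact hne (Finset.eq_univ_of_card s (by rw [hcard, Fintype.card_fin]))
  · have : ((Finset.univ : Finset (Finset (Fin n))).filter
        (fun s => s ≠ Finset.univ ∧ s.card = k)) = Finset.univ.powersetCard k := by
      ext s
      simp only [Finset.mem_filter, Finset.mem_univ, true_and,
        Finset.mem_powersetCard_univ]
      constructor
      · exact fun h => h.2
      · intro hs
        refine ⟨fun hu => h ?_, hs⟩
        rw [← hs, hu, Finset.card_univ, Fintype.card_fin]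
      
    rw [this, Finset.card_powersetCard, Finset.card_univ, Fintype.card_fin]

end counting

section counting2
open Finset
variable {n : ℕ}

lemma countPairs (i : ℕ) :
    ((Finset.univ : Finset (Finset (Fin n) × Finset (Fin n))).filter
      (fun p => p.1 ≠ Finset.univ ∧ p.2 ≠ Finset.univ ∧ p.1.card + p.2.card = i)).card =
    ∑ ab ∈ Finset.HasAntidiagonal.antidiagonal i,
      (if ab.1 = n then 0 else n.choose ab.1) *
        (if ab.2 = n then 0 else n.choose ab.2) := by
  have key : ((Finset.univ : Finset (Finset (Fin n) × Finset (Fin n))).filter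
      (fun p => p.1 ≠ Finset.univ ∧ p.2 ≠ Finset.univ ∧ p.1.card + p.2.card = i)) =
      (Finset.HasAntidiagonal.antidiagonal i).biUnion (fun ab =>
        (Finset.univ.filter (fun s : Finset (Fin n) => s ≠ Finset.univ ∧ s.card = ab.1)) ×ˢ
        (Finset.univ.filter (fun s : Finset (Fin n) => s ≠ Finset.univ ∧ s.card = ab.2))) := by
    ext p
    simp only [Finset.mem_filter, Finset.mem_univ, true_and, Finset.mem_biUnion,
      Finset.HasAntidiagonal.mem_antidiagonal, Finset.mem_product, Prod.exists]
    constructor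
    · rintro ⟨h1, h2, h3⟩
      exact ⟨p.1.card, p.2.card, h3, ⟨h1, rfl⟩, ⟨h2, rfl⟩⟩
    · rintro ⟨a, b, hab, ⟨h1, ha⟩, ⟨h2, hb⟩⟩
      exact ⟨h1, h2, by omega⟩
  rw [key, Finset.card_biUnion]
  · refine Finset.sum_congr rfl (fun ab _ => ?_)
    rw [Finset.card_product, countA, countA]
  · rintro ⟨a, b⟩ hab ⟨c, d⟩ hcd hne
    rw [Function.onFun, Finset.disjoint_left]
    rintro p hp hq
    simp only [Finset.mem_product, Finset.mem_filter, Finset.mem_univ, true_and] at hp hq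
    exact hne (by rw [Prod.mk.injEq]; exact ⟨hp.1.2 ▸ hq.1.2.symm ▸ rfl, hp.2.2 ▸ hq.2.2.symm ▸ rfl⟩)

end counting2

section bridge
open Finset
variable {n : ℕ}

lemma main_iff (hn : 3 ≤ n) (X : Set (Fin n ⊕ Fin n)) :
    TotalVis (KG (Fin n) (Fin n)) X ↔
      (X ∩ Set.range Sum.inl).ncard ≤ n - 1 ∧
        (X ∩ Set.range Sum.inr).ncard ≤ n - 1 := by
  have nt : Nontrivial (Fin n) := Fin.nontrivial_iff_two_le.mpr (by omega)
  rw [totalVis_iff, inter_range_inl_ncard, inter_range_inr_ncard,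
    ncard_le_iff (by omega), ncard_le_iff (by omega)]
  exact Iff.rfl

lemma count_main (hn : 3 ≤ n) (i : ℕ) :
    Nat.card {X : Set (Fin n ⊕ Fin n) //
        TotalVis (KG (Fin n) (Fin n)) X ∧ X.ncard = i} =
      ((Finset.univ : Finset (Finset (Fin n) × Finset (Fin n))).filter
        (fun p => p.1 ≠ Finset.univ ∧ p.2 ≠ Finset.univ ∧ p.1.card + p.2.card = i)).card := by
  classical
  have nt : Nontrivial (Fin n) := Fin.nontrivial_iff_two_le.mpr (by omega)
  have tofin_ne : ∀ s : Set (Fin n), s.toFinset ≠ Finset.univ ↔ s ≠ Set.univ := by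
    intro s
    rw [← Set.toFinset_univ, Ne, Ne, Set.toFinset_inj]
  let e : {X : Set (Fin n ⊕ Fin n) //
        TotalVis (KG (Fin n) (Fin n)) X ∧ X.ncard = i} ≃
      {p : Finset (Fin n) × Finset (Fin n) //
        p.1 ≠ Finset.univ ∧ p.2 ≠ Finset.univ ∧ p.1.card + p.2.card = i} := by
    refine Equiv.subtypeEquiv
      (sumSetEquiv.trans (Equiv.prodCongr Fintype.finsetEquivSet.symm Fintype.finsetEquivSet.symm))
      (fun X => ?_)
    rw [totalVis_iff]
    simp only [Equiv.trans_apply, Equiv.prodCongr_apply, Prod.map, sumSetEquiv,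
      Equiv.coe_fn_mk, Fintype.finsetEquivSet_symm_apply, tofin_ne,
      ← Set.ncard_eq_toFinset_card', Set.ne_univ_iff_exists_notMem, Set.mem_preimage]
    rw [ncard_split X, inter_range_inl_ncard, inter_range_inr_ncard]
    tauto
  rw [Nat.card_congr e, Nat.card_eq_fintype_card, Fintype.card_subtype]

end bridge


theorem stmt_10 (n : ℕ) (hn : 3 ≤ n) :
    (∀ X : Set (Fin n ⊕ Fin n),
      TotalVis (completeBipartiteGraph (Fin n) (Fin n)) X ↔
        (X ∩ Set.range Sum.inl).ncard ≤ n - 1 ∧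
          (X ∩ Set.range Sum.inr).ncard ≤ n - 1) ∧
    (∃ X : Set (Fin n ⊕ Fin n),
      TotalVis (completeBipartiteGraph (Fin n) (Fin n)) X ∧
        X.ncard = 2 * n - 2) ∧
    (∀ X : Set (Fin n ⊕ Fin n),
      TotalVis (completeBipartiteGraph (Fin n) (Fin n)) X →
        X.ncard ≤ 2 * n - 2) ∧
    (∀ i : ℕ,
      (Nat.card {X : Set (Fin n ⊕ Fin n) //
          TotalVis (completeBipartiteGraph (Fin n) (Fin n)) X ∧ X.ncard = i} : ℤ) =
        ((((Polynomial.X + 1) ^ n - Polynomial.X ^ n) ^ 2 : Polynomial ℤ)).coeff i) := by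
  have nt : Nontrivial (Fin n) := Fin.nontrivial_iff_two_le.mpr (by omega)
  refine ⟨main_iff hn, ?_, ?_, ?_⟩
  · set z : Fin n := ⟨0, by omega⟩ with hz
    refine ⟨({Sum.inl z, Sum.inr z} : Set (Fin n ⊕ Fin n))ᶜ, ?_, ?_⟩
    · exact totalVis_iff.mpr ⟨⟨z, by simp⟩, ⟨z, by simp⟩⟩
    · have h := Set.ncard_add_ncard_compl ({Sum.inl z, Sum.inr z} : Set (Fin n ⊕ Fin n))
      rw [Set.ncard_pair (by simp), Nat.card_eq_fintype_card, Fintype.card_sum,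
        Fintype.card_fin] at h
      omega
  · intro X hX
    obtain ⟨h1, h2⟩ := (main_iff hn X).mp hX
    rw [ncard_split]
    omega
  · intro i
    rw [count_main hn i, countPairs, sq, Polynomial.coeff_mul]
    push_cast
    refine Finset.sum_congr rfl fun ab _ => ?_
    have hc : ∀ k, (((Polynomial.X + 1 : Polynomial ℤ) ^ n - Polynomial.X ^ n).coeff k) =
        (n.choose k : ℤ) - (if k = n then 1 else 0) := fun k => by
      rw [Polynomial.coeff_sub, Polynomial.coeff_X_add_one_pow, Polynomial.coeff_X_pow]
    rw [hc, hc]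
    split_ifs with h1 h2 h2 <;> simp [h1, h2, Nat.choose_self]
end

section
/- If G is a geodetic graph, then the total mutual-visibility number of G equals the number of simplicial vertices of G, and the set S(G) of simplicial vertices is the unique maximum total mutual-visibility set of G. -/
open SimpleGraph

variable {V : Type*}

/-- `G` is geodetic: shortest paths are unique. -/
def Geodetic (G : SimpleGraph V) : Prop :=
  ∀ (u v : V) (p q : G.Walk u v),
    p.length = G.dist u v → q.length = G.dist u v → p = q

/-- `v` is a simplicial vertex of `G`. -/
def Simplicial (G : SimpleGraph V) (v : V) : Prop :=
  ∀ ⦃x⦄, G.Adj v x → ∀ ⦃y⦄, G.Adj v y → x ≠ y → G.Adj x y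


lemma internal_not_simplicial (G : SimpleGraph V) {u v : V} (p : G.Walk u v)
    (hp : p.length = G.dist u v) {w : V} (hw : w ∈ p.support) (hwu : w ≠ u) (hwv : w ≠ v) :
    ¬ Simplicial G w := by
  intro hs
  classical
  set q := p.takeUntil w hw with hq
  set r := p.dropUntil w hw with hr
  have hspec : q.append r = p := p.take_spec hw
  have hlen : q.length + r.length = p.length := by
    rw [← hspec]; simp [Walk.length_append]
  have hqnil : ¬ q.reverse.Nil := by
    rw [Walk.not_nil_iff_lt_length, Walk.length_reverse]
    rcases Nat.eq_zero_or_pos q.length with h | h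
    · exact absurd (Walk.eq_of_length_eq_zero h) (Ne.symm hwu ∘ id)
    · exact h
  have hrnil : ¬ r.Nil := by
    rw [Walk.not_nil_iff_lt_length]
    rcases Nat.eq_zero_or_pos r.length with h | h
    · exact absurd (Walk.eq_of_length_eq_zero h) hwv
    · exact h
  obtain ⟨x, hwx, s, hqe⟩ := Walk.not_nil_iff.mp hqnil
  obtain ⟨y, hwy, t, hre⟩ := Walk.not_nil_iff.mp hrnil
  have hqs : q.length = s.length + 1 := by
    have := congrArg Walk.length hqe
    simpa [Walk.length_reverse] using this
  have hrt : r.length = t.length + 1 := by simp [hre]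
  have hdist := hp
  by_cases hxy : x = y
  · subst hxy
    have hd := G.dist_le (s.reverse.append t)
    simp [Walk.length_append, Walk.length_reverse] at hd
    omega
  · have hadj : G.Adj x y := hs hwx hwy hxy
    have hd := G.dist_le (s.reverse.append (Walk.cons hadj t))
    simp [Walk.length_append, Walk.length_reverse] at hd
    omega

lemma totalvis_subset_simplicial (G : SimpleGraph V) (hG : G.Connected)
    (hgeo : Geodetic G) {X : Set V} (hX : TotalVis G X) :
    X ⊆ {v | Simplicial G v} := by
  intro w hwX
  by_contra hns
  simp only [Set.mem_setOf_eq, Simplicial, not_forall] at hns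
  obtain ⟨x, hwx, y, hwy, hxy, hnadj⟩ := hns
  set c : G.Walk x y := Walk.cons hwx.symm (Walk.cons hwy Walk.nil) with hc
  have hclen : c.length = 2 := by simp [hc]
  have hd2 : G.dist x y = 2 := by
    have hle : G.dist x y ≤ 2 := hclen ▸ G.dist_le c
    have h0 : 0 < G.dist x y := hG.pos_dist_of_ne hxy
    have h1 : G.dist x y ≠ 1 := fun h => hnadj (SimpleGraph.dist_eq_one_iff_adj.mp h)
    omega
  obtain ⟨p, hp, hint⟩ := hX x y
  have hpc : p = c := hgeo x y p c hp (by rw [hclen, hd2])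
  have hwc : w ∈ p.support := by rw [hpc]; simp [hc]
  exact hint w hwc (fun h => G.irrefl (h ▸ hwx)) (fun h => G.irrefl (h ▸ hwy)) hwX

theorem stmt_13 [Fintype V] (G : SimpleGraph V) (hG : G.Connected)
    (hgeo : Geodetic G) :
    TotalVis G {v | Simplicial G v} ∧
    (∀ X : Set V, TotalVis G X → X.ncard ≤ ({v | Simplicial G v} : Set V).ncard) ∧
    (∀ X : Set V, TotalVis G X → X.ncard = ({v | Simplicial G v} : Set V).ncard →
      X = {v | Simplicial G v}) := by
  have hS : TotalVis G {v | Simplicial G v} := by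
    intro u v
    obtain ⟨p, hp⟩ := hG.exists_walk_length_eq_dist u v
    exact ⟨p, hp, fun w hw hwu hwv => internal_not_simplicial G p hp hw hwu hwv⟩
  refine ⟨hS, fun X hX => Set.ncard_le_ncard (totalvis_subset_simplicial G hG hgeo hX)
    (Set.toFinite _), fun X hX hcard => ?_⟩
  exact Set.eq_of_subset_of_ncard_le (totalvis_subset_simplicial G hG hgeo hX)
    hcard.ge (Set.toFinite _)
end

section
/- For a connected graph G and X ⊆ V(G), the following are equivalent: (i) X is a total mutual-visibility set of G; (ii) any two vertices u,v with d_G(u,v) = 2 are X-visible; (iii) any two vertices u,v with d_G(u,v) = 2 satisfy N_G(u) ∩ N_G(v) ⊄ X. -/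
open SimpleGraph

variable {V : Type*}

lemma key_s14 (G : SimpleGraph V) (hG : G.Connected) (X : Set V)
    (h3 : ∀ u v : V, G.dist u v = 2 → ¬ (G.neighborSet u ∩ G.neighborSet v ⊆ X)) :
    ∀ n : ℕ, ∀ u v : V, G.dist u v = n → XVisible G X u v := by
  intro n
  induction n using Nat.strong_induction_on with
  | _ n IH =>
  intro u v hd
  match n, hd with
  | 0, hd =>
    have huv : u = v := (hG.dist_eq_zero_iff).mp hd
    subst huv
    exact ⟨Walk.nil, by simpa using hd.symm, by simp⟩
  | 1, hd =>
    have : G.Adj u v := (dist_eq_one_iff_adj).mp hd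
    refine ⟨Walk.cons this Walk.nil, by simpa using hd.symm, ?_⟩
    intro w hw hwu hwv
    simp [Walk.support] at hw
    rcases hw with h | h <;> [exact absurd h hwu; exact absurd h hwv]
  | (n+2), hd =>
    -- get shortest walk from u to v
    obtain ⟨p, hp⟩ := hG.exists_walk_length_eq_dist u v
    rw [hd] at hp
    cases p with
    | nil => simp at hp
    | cons hux q =>
      rename_i x
      have hqlen : q.length = n + 1 := by simpa using hp
      have hdxv : G.dist x v = n + 1 := by
        have h1 : G.dist x v ≤ n + 1 := hqlen ▸ dist_le q
        have h2 : n + 2 ≤ G.dist u x + G.dist x v := hd ▸ hG.dist_triangle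
        have hux1 : G.dist u x = 1 := dist_eq_one_iff_adj.mpr hux
        omega
      obtain ⟨P, hPlen, hPX⟩ := IH (n+1) (by omega) x v hdxv
      rw [hdxv] at hPlen
      cases P with
      | nil => simp at hPlen
      | cons hxy Q =>
        rename_i y
        have hQlen : Q.length = n := by simpa using hPlen
        have hdyv : G.dist y v = n := by
          have h1 : G.dist y v ≤ n := hQlen ▸ dist_le Q
          have h2 : n + 2 ≤ G.dist u y + G.dist y v := hd ▸ hG.dist_triangle
          have h3 : G.dist u y ≤ 2 := by
            have := dist_le (Walk.cons hux (Walk.cons hxy Walk.nil))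
            simpa using this
          omega
        have hduy : G.dist u y = 2 := by
          have h2 : n + 2 ≤ G.dist u y + G.dist y v := hd ▸ hG.dist_triangle
          have h3 : G.dist u y ≤ 2 := by
            have := dist_le (Walk.cons hux (Walk.cons hxy Walk.nil))
            simpa using this
          omega
        obtain ⟨z, hz, hzX⟩ := Set.not_subset.mp (h3 u y hduy)
        obtain ⟨hzu, hzy⟩ := hz
        rw [mem_neighborSet] at hzu hzy
        refine ⟨Walk.cons hzu (Walk.cons hzy.symm Q), by simp [hQlen, hd], ?_⟩
        intro w hw hwu hwv
        simp [Walk.support_cons] at hw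
        rcases hw with h | h | h
        · exact absurd h hwu
        · exact h ▸ hzX
        · -- w ∈ Q.support
          have hPpath : (Walk.cons hxy Q).IsPath :=
            Walk.isPath_of_length_eq_dist _ (by rw [hPlen, hdxv])
          have hxQ : x ∉ Q.support := by
            have := hPpath.support_nodup
            simp [Walk.support_cons] at this
            exact this.1
          have hwx : w ≠ x := fun h' => hxQ (h' ▸ h)
          exact hPX w (by simp [Walk.support_cons, h]) hwx hwv


theorem two_to_three (G : SimpleGraph V) (X : Set V)
    (h2 : ∀ u v : V, G.dist u v = 2 → XVisible G X u v) :
    ∀ u v : V, G.dist u v = 2 → ¬ (G.neighborSet u ∩ G.neighborSet v ⊆ X) := by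
  intro u v hd hsub
  obtain ⟨p, hplen, hpX⟩ := h2 u v hd
  rw [hd] at hplen
  cases p with
  | nil => simp at hplen
  | cons h q =>
    rename_i z
    cases q with
    | nil => simp at hplen
    | cons h2' q' =>
      cases q' with
      | nil =>
        have hzX : z ∉ X := hpX z (by simp) (G.ne_of_adj h).symm (G.ne_of_adj h2')
        exact hzX (hsub ⟨h, h2'.symm⟩)
      | cons _ _ => simp at hplen

theorem stmt_14 (G : SimpleGraph V) (hG : G.Connected) (X : Set V) :
    List.TFAE
      [TotalVis G X,
       ∀ u v : V, G.dist u v = 2 → XVisible G X u v,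
       ∀ u v : V, G.dist u v = 2 →
         ¬ (G.neighborSet u ∩ G.neighborSet v ⊆ X)] := by
  tfae_have 1 → 2
  | h, u, v, _ => h u v
  tfae_have 2 → 3
  | h => two_to_three G X h
  tfae_have 3 → 1
  | h, u, v => key_s14 G hG X h (G.dist u v) u v rfl
  tfae_finish
end

section
/- For a connected graph G, μ_t(G) = 1 if and only if G has at least one bypass vertex and any two distinct bypass vertices v1, v2 satisfy: there exist nonadjacent vertices u1, u2 with N_G(u1) ∩ N_G(u2) = {v1, v2}. -/
open SimpleGraph

variable {V : Type*}

/-- `v` is a bypass vertex of `G`: it is not the central vertex of a convex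
path on three vertices, i.e. every two distinct nonadjacent neighbors of `v`
have a common neighbor other than `v`. -/
def Bypass (G : SimpleGraph V) (v : V) : Prop :=
  ∀ ⦃x⦄, G.Adj v x → ∀ ⦃y⦄, G.Adj v y → x ≠ y → ¬ G.Adj x y →
    ∃ w, w ≠ v ∧ G.Adj x w ∧ G.Adj y w

section Aux

variable {G : SimpleGraph V}

lemma two_walk {u v : V} (p : G.Walk u v) (h : p.length = 2) :
    ∃ m, G.Adj u m ∧ G.Adj m v ∧ p.support = [u, m, v] := by
  cases p with
  | nil => simp at h
  | cons h₁ q =>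
    cases q with
    | nil => simp at h
    | @cons _ c _ h₂ q' =>
      have hq' : q'.Nil := by
        rw [SimpleGraph.Walk.nil_iff_length_eq]
        simp only [SimpleGraph.Walk.length_cons] at h
        omega
      have hc : c = v := hq'.eq
      subst hc
      have : q' = SimpleGraph.Walk.nil := hq'.eq_nil
      subst this
      exact ⟨_, h₁, h₂, by simp⟩

lemma dist_eq_two {u v m : V} (hne : u ≠ v) (hna : ¬ G.Adj u v)
    (h1 : G.Adj u m) (h2 : G.Adj m v) : G.dist u v = 2 := by
  have hle : G.dist u v ≤ 2 := by
    have := G.dist_le (SimpleGraph.Walk.cons h1 (SimpleGraph.Walk.cons h2 SimpleGraph.Walk.nil))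
    simpa using this
  have h0 : G.dist u v ≠ 0 := by
    intro h
    rcases SimpleGraph.dist_eq_zero_iff_eq_or_not_reachable.mp h with h | h
    · exact hne h
    · exact h ⟨SimpleGraph.Walk.cons h1 (SimpleGraph.Walk.cons h2 SimpleGraph.Walk.nil)⟩
  have h1' : G.dist u v ≠ 1 := fun h => hna (SimpleGraph.dist_eq_one_iff_adj.mp h)
  omega

/-- Core rerouting lemma: an internal vertex `v` of a shortest path has
nonadjacent path-neighbors `x, y`, and any common neighbor `w` of `x, y`
yields a shortest walk whose support is contained in that of `p` with `v`
replaced by `w`. -/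
lemma core {a b v : V} (p : G.Walk a b) (hl : p.length = G.dist a b)
    (hv : v ∈ p.support) (hva : v ≠ a) (hvb : v ≠ b) :
    ∃ x y : V, x ≠ y ∧ ¬ G.Adj x y ∧ G.Adj x v ∧ G.Adj v y ∧
      ∀ w : V, G.Adj x w → G.Adj w y →
        ∃ p' : G.Walk a b, p'.length = G.dist a b ∧
          ∀ z ∈ p'.support, z = w ∨ (z ∈ p.support ∧ z ≠ v) := by
  classical
  have hp : p.IsPath := p.isPath_of_length_eq_dist hl
  set q := p.takeUntil v hv with hqdef
  set r := p.dropUntil v hv with hrdef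
  have hspec : q.append r = p := p.take_spec hv
  have hqp : q.IsPath := hp.takeUntil hv
  have hrp : r.IsPath := hp.dropUntil hv
  have hqn : ¬ q.reverse.Nil := SimpleGraph.Walk.not_nil_of_ne hva
  obtain ⟨x, hvx, t, ht⟩ := SimpleGraph.Walk.not_nil_iff.mp hqn
  have hrn : ¬ r.Nil := SimpleGraph.Walk.not_nil_of_ne hvb
  obtain ⟨y, hvy, r', hr'⟩ := SimpleGraph.Walk.not_nil_iff.mp hrn
  -- lengths
  have hql : q.length = t.length + 1 := by
    have := congrArg SimpleGraph.Walk.length ht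
    simpa using this
  have hrl : r.length = r'.length + 1 := by
    have := congrArg SimpleGraph.Walk.length hr'
    simpa using this
  have hpl : p.length = q.length + r.length := by
    rw [← hspec, SimpleGraph.Walk.length_append]
  -- support facts
  have hqsupp : q.support = (v :: t.support).reverse := by
    have : q.reverse.support = v :: t.support := by rw [ht]; simp
    have h2 := congrArg List.reverse this
    rwa [SimpleGraph.Walk.support_reverse, List.reverse_reverse] at h2
  have hvt : v ∉ t.support := by
    have hnd : q.support.Nodup := hqp.support_nodup
    rw [hqsupp] at hnd
    simp only [List.nodup_reverse, List.nodup_cons] at hnd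
    exact hnd.1
  have hrsupp : r.support = v :: r'.support := by rw [hr']; simp
  have hvr' : v ∉ r'.support := by
    have hnd : r.support.Nodup := hrp.support_nodup
    rw [hrsupp] at hnd
    exact (List.nodup_cons.mp hnd).1
  have htsub : ∀ z ∈ t.support, z ∈ p.support := by
    intro z hz
    rw [← hspec, SimpleGraph.Walk.mem_support_append_iff]
    left
    rw [hqsupp]
    simp [hz]
  have hrsub : ∀ z ∈ r'.support, z ∈ p.support := by
    intro z hz
    rw [← hspec, SimpleGraph.Walk.mem_support_append_iff]
    right
    rw [hrsupp]
    simp [hz]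
  have hxy : x ≠ y := by
    intro h
    subst h
    have : G.dist a b ≤ (t.reverse.append r').length := G.dist_le _
    rw [SimpleGraph.Walk.length_append, SimpleGraph.Walk.length_reverse] at this
    omega
  have hnadj : ¬ G.Adj x y := by
    intro h
    have : G.dist a b ≤ (t.reverse.append (SimpleGraph.Walk.cons h r')).length := G.dist_le _
    rw [SimpleGraph.Walk.length_append, SimpleGraph.Walk.length_reverse] at this
    simp only [SimpleGraph.Walk.length_cons] at this
    omega
  refine ⟨x, y, hxy, hnadj, hvx.symm, hvy, ?_⟩
  intro w hxw hwy
  refine ⟨t.reverse.append (SimpleGraph.Walk.cons hxw (SimpleGraph.Walk.cons hwy r')), ?_, ?_⟩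
  · rw [SimpleGraph.Walk.length_append, SimpleGraph.Walk.length_reverse]
    simp only [SimpleGraph.Walk.length_cons]
    omega
  · intro z hz
    rw [SimpleGraph.Walk.mem_support_append_iff] at hz
    rcases hz with hz | hz
    · rw [SimpleGraph.Walk.support_reverse, List.mem_reverse] at hz
      right
      exact ⟨htsub z hz, fun h => hvt (h ▸ hz)⟩
    · simp only [SimpleGraph.Walk.support_cons, List.mem_cons] at hz
      rcases hz with rfl | hz
      · right
        exact ⟨htsub z t.start_mem_support,
          fun h => hvt (h ▸ t.start_mem_support)⟩
      rcases hz with rfl | hz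
      · exact Or.inl rfl
      · right
        exact ⟨hrsub z hz, fun h => hvr' (h ▸ hz)⟩

lemma totalVis_mono {X Y : Set V} (h : X ⊆ Y) (hY : TotalVis G Y) : TotalVis G X := by
  intro a b
  obtain ⟨p, hl, hi⟩ := hY a b
  exact ⟨p, hl, fun z hz hza hzb hzX => hi z hz hza hzb (h hzX)⟩

lemma bypass_totalVis (hG : G.Connected) {v : V} (hb : Bypass G v) :
    TotalVis G {v} := by
  classical
  intro a b
  obtain ⟨p0, hl0⟩ := hG.exists_walk_length_eq_dist a b
  set p := p0.bypass with hpdef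
  have hl : p.length = G.dist a b :=
    le_antisymm (hl0 ▸ p0.length_bypass_le) (G.dist_le p)
  by_cases hcase : v ∈ p.support ∧ v ≠ a ∧ v ≠ b
  · obtain ⟨hvs, hva, hvb⟩ := hcase
    obtain ⟨x, y, hxy, hnadj, hxv, hvy, hrepl⟩ := core p hl hvs hva hvb
    obtain ⟨w, hwv, hxw, hyw⟩ := hb hxv.symm hvy hxy hnadj
    obtain ⟨p', hl', hsupp⟩ := hrepl w hxw hyw.symm
    refine ⟨p', hl', ?_⟩
    intro z hz hza hzb hzX
    rw [Set.mem_singleton_iff] at hzX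
    subst hzX
    rcases hsupp _ hz with rfl | ⟨_, hzv⟩
    · exact hwv rfl
    · exact hzv rfl
  · refine ⟨p, hl, ?_⟩
    intro z hz hza hzb hzX
    rw [Set.mem_singleton_iff] at hzX
    subst hzX
    exact hcase ⟨hz, hza, hzb⟩

lemma totalVis_bypass {v : V} (hT : TotalVis G {v}) : Bypass G v := by
  intro x hx y hy hxy hna
  obtain ⟨p, hl, hint⟩ := hT x y
  have hd : G.dist x y = 2 := dist_eq_two hxy hna hx.symm hy
  rw [hd] at hl
  obtain ⟨m, h1, h2, hsupp⟩ := two_walk p hl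
  have hmv : m ∉ ({v} : Set V) :=
    hint m (by rw [hsupp]; simp) h1.ne' h2.ne
  rw [Set.mem_singleton_iff] at hmv
  exact ⟨m, hmv, h1, h2.symm⟩

lemma pair_exists (hG : G.Connected) {v₁ v₂ a b : V}
    (hb1 : Bypass G v₁) (hb2 : Bypass G v₂)
    (hnv : ¬ XVisible G {v₁, v₂} a b) :
    ∃ u₁ u₂ : V, u₁ ≠ u₂ ∧ ¬ G.Adj u₁ u₂ ∧
      G.neighborSet u₁ ∩ G.neighborSet u₂ = {v₁, v₂} := by
  classical
  obtain ⟨p0, hl0, hint0⟩ := bypass_totalVis hG hb1 a b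
  set p := p0.bypass with hpdef
  have hl : p.length = G.dist a b :=
    le_antisymm (hl0 ▸ p0.length_bypass_le) (G.dist_le p)
  have hint : ∀ z ∈ p.support, z ≠ a → z ≠ b → z ≠ v₁ := by
    intro z hz hza hzb
    have := hint0 z (p0.support_bypass_subset hz) hza hzb
    simpa using this
  have hv2 : v₂ ∈ p.support ∧ v₂ ≠ a ∧ v₂ ≠ b := by
    by_contra hc
    apply hnv
    refine ⟨p, hl, ?_⟩
    intro z hz hza hzb hzX
    rcases hzX with rfl | hzX
    · exact hint z hz hza hzb rfl
    · rw [Set.mem_singleton_iff] at hzX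
      subst hzX
      exact hc ⟨hz, hza, hzb⟩
  obtain ⟨hv2s, hv2a, hv2b⟩ := hv2
  obtain ⟨x, y, hxy, hnadj, hxv, hvy, hrepl⟩ := core p hl hv2s hv2a hv2b
  have hsub : ∀ w, G.Adj x w → G.Adj y w → w = v₁ ∨ w = v₂ := by
    intro w hxw hyw
    by_contra hc
    push_neg at hc
    obtain ⟨p', hl', hsupp⟩ := hrepl w hxw hyw.symm
    apply hnv
    refine ⟨p', hl', ?_⟩
    intro z hz hza hzb hzX
    rcases hsupp z hz with rfl | ⟨hzp, hzv2⟩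
    · rcases hzX with rfl | hzX
      · exact hc.1 rfl
      · rw [Set.mem_singleton_iff] at hzX
        exact hc.2 hzX
    · rcases hzX with rfl | hzX
      · exact hint z hzp hza hzb rfl
      · rw [Set.mem_singleton_iff] at hzX
        exact hzv2 hzX
  obtain ⟨w, hwv2, hxw, hyw⟩ := hb2 hxv.symm hvy hxy hnadj
  have hw1 : w = v₁ := (hsub w hxw hyw).resolve_right hwv2
  subst hw1
  refine ⟨x, y, hxy, hnadj, ?_⟩
  ext w'
  simp only [Set.mem_inter_iff, SimpleGraph.mem_neighborSet, Set.mem_insert_iff,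
    Set.mem_singleton_iff]
  constructor
  · rintro ⟨h1, h2⟩
    exact hsub w' h1 h2
  · rintro (rfl | rfl)
    · exact ⟨hxw, hyw⟩
    · exact ⟨hxv, hvy.symm⟩

lemma not_vis {u₁ u₂ v₁ v₂ : V} (hne : u₁ ≠ u₂) (hna : ¬ G.Adj u₁ u₂)
    (hN : G.neighborSet u₁ ∩ G.neighborSet u₂ = {v₁, v₂}) :
    ¬ XVisible G {v₁, v₂} u₁ u₂ := by
  have hv1 : G.Adj u₁ v₁ ∧ G.Adj u₂ v₁ := by
    have : v₁ ∈ G.neighborSet u₁ ∩ G.neighborSet u₂ := by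
      rw [hN]; exact Or.inl rfl
    simpa using this
  have hd : G.dist u₁ u₂ = 2 := dist_eq_two hne hna hv1.1 hv1.2.symm
  rintro ⟨p, hl, hint⟩
  rw [hd] at hl
  obtain ⟨m, h1, h2, hsupp⟩ := two_walk p hl
  have hm : m ∈ ({v₁, v₂} : Set V) := by
    have : m ∈ G.neighborSet u₁ ∩ G.neighborSet u₂ := ⟨h1, h2.symm⟩
    rwa [hN] at this
  exact hint m (by rw [hsupp]; simp) h1.ne' h2.ne hm

end Aux

theorem stmt_15 [Fintype V] (G : SimpleGraph V) (hG : G.Connected) :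
    ((∃ X : Set V, TotalVis G X ∧ X.ncard = 1) ∧
        ∀ X : Set V, TotalVis G X → X.ncard ≤ 1) ↔
      ((∃ v, Bypass G v) ∧
        ∀ v₁ v₂ : V, Bypass G v₁ → Bypass G v₂ → v₁ ≠ v₂ →
          ∃ u₁ u₂ : V, u₁ ≠ u₂ ∧ ¬ G.Adj u₁ u₂ ∧
            G.neighborSet u₁ ∩ G.neighborSet u₂ = {v₁, v₂}) := by
  constructor
  · rintro ⟨⟨X, hX, hX1⟩, hle⟩
    obtain ⟨v, rfl⟩ := Set.ncard_eq_one.mp hX1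
    refine ⟨⟨v, totalVis_bypass hX⟩, ?_⟩
    intro v₁ v₂ hb1 hb2 h12
    have hnt : ¬ TotalVis G {v₁, v₂} := by
      intro h
      have := hle _ h
      rw [Set.ncard_pair h12] at this
      omega
    simp only [TotalVis, not_forall] at hnt
    obtain ⟨a, b, hab⟩ := hnt
    exact pair_exists hG hb1 hb2 hab
  · rintro ⟨⟨v, hv⟩, hpair⟩
    refine ⟨⟨{v}, bypass_totalVis hG hv, Set.ncard_singleton v⟩, ?_⟩
    intro X hX
    by_contra h
    push_neg at h
    obtain ⟨v₁, v₂, hv₁, hv₂, h12⟩ := (Set.one_lt_ncard_iff X.toFinite).mp h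
    have hb1 : Bypass G v₁ :=
      totalVis_bypass (totalVis_mono (by simpa using hv₁) hX)
    have hb2 : Bypass G v₂ :=
      totalVis_bypass (totalVis_mono (by simpa using hv₂) hX)
    have hsub : TotalVis G {v₁, v₂} := by
      refine totalVis_mono ?_ hX
      intro z hz
      rcases hz with rfl | hz
      · exact hv₁
      · rw [Set.mem_singleton_iff] at hz
        exact hz ▸ hv₂
    obtain ⟨u₁, u₂, hne, hna, hN⟩ := hpair v₁ v₂ hb1 hb2 h12
    exact not_vis hne hna hN (hsub u₁ u₂)
end

section
/- For n ≥ 7, the only dual mutual-visibility set of the cycle C_n is the empty set, i.e., μ_d(C_n) = 0. -/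
open SimpleGraph

variable {V : Type*}

lemma cyc_adj {n : ℕ} {u v : ZMod n} : (cyc n).Adj u v ↔ u ≠ v ∧ (v = u + 1 ∨ v = u - 1) := by
  constructor
  · rintro ⟨h, h1 | h1⟩
    · exact ⟨h, Or.inr (by linear_combination -h1)⟩
    · exact ⟨h, Or.inl (by linear_combination h1)⟩
  · rintro ⟨h, h1 | h1⟩
    · exact ⟨h, Or.inr (by linear_combination h1)⟩
    · exact ⟨h, Or.inl (by linear_combination -h1)⟩

lemma zne {n : ℕ} (k : ℕ) (h1 : 0 < k) (h2 : k < n) : ((k : ZMod n) ≠ 0) := by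
  haveI : NeZero n := ⟨by omega⟩
  rw [Ne, ZMod.natCast_eq_zero_iff]
  exact fun h => absurd (Nat.le_of_dvd h1 h) (by omega)

section
variable {n : ℕ} (hn : 7 ≤ n)
include hn

lemma z1 : (1 : ZMod n) ≠ 0 := by have := zne (n := n) 1 (by omega) (by omega); simpa using this
lemma z2 : (2 : ZMod n) ≠ 0 := by have := zne (n := n) 2 (by omega) (by omega); simpa using this
lemma z3 : (3 : ZMod n) ≠ 0 := by have := zne (n := n) 3 (by omega) (by omega); simpa using this
lemma z4 : (4 : ZMod n) ≠ 0 := by have := zne (n := n) 4 (by omega) (by omega); simpa using this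
lemma z5 : (5 : ZMod n) ≠ 0 := by have := zne (n := n) 5 (by omega) (by omega); simpa using this
lemma z6 : (6 : ZMod n) ≠ 0 := by have := zne (n := n) 6 (by omega) (by omega); simpa using this

lemma walk2 : ∀ {u v : ZMod n} (p : (cyc n).Walk u v), p.length ≤ 2 → v = u + 2 →
    u + 1 ∈ p.support
  | u, _, .nil, _, hv => absurd (show (2:ZMod n) = 0 by linear_combination -hv) (z2 hn)
  | u, v, .cons h .nil, _, hv => by
      rw [cyc_adj] at h
      rcases h.2 with h1 | h1
      · exact absurd (show (1:ZMod n) = 0 by linear_combination h1 - hv) (z1 hn)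
      · exact absurd (show (3:ZMod n) = 0 by linear_combination h1 - hv) (z3 hn)
  | u, v, .cons (v := a) h (.cons h' .nil), _, hv => by
      rw [cyc_adj] at h h'
      rcases h.2 with h1 | h1
      · rw [← h1]; simp
      · rcases h'.2 with h2 | h2
        · exact absurd (show (2:ZMod n) = 0 by linear_combination h1 + h2 - hv) (z2 hn)
        · exact absurd (show (4:ZMod n) = 0 by linear_combination h1 + h2 - hv) (z4 hn)
  | u, v, .cons _ (.cons _ (.cons _ q)), hp, hv => by simp at hp

lemma walk3 : ∀ {u v : ZMod n} (p : (cyc n).Walk u v), p.length ≤ 3 → v = u + 3 →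
    u + 1 ∈ p.support ∧ u + 2 ∈ p.support
  | u, _, .nil, _, hv => absurd (show (3:ZMod n) = 0 by linear_combination -hv) (z3 hn)
  | u, v, .cons h .nil, _, hv => by
      rw [cyc_adj] at h
      rcases h.2 with h1 | h1
      · exact absurd (show (2:ZMod n) = 0 by linear_combination h1 - hv) (z2 hn)
      · exact absurd (show (4:ZMod n) = 0 by linear_combination h1 - hv) (z4 hn)
  | u, v, .cons h (.cons h' .nil), _, hv => by
      rw [cyc_adj] at h h'
      rcases h.2 with h1 | h1 <;> rcases h'.2 with h2 | h2
      · exact absurd (show (1:ZMod n) = 0 by linear_combination h1 + h2 - hv) (z1 hn)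
      · exact absurd (show (3:ZMod n) = 0 by linear_combination h1 + h2 - hv) (z3 hn)
      · exact absurd (show (3:ZMod n) = 0 by linear_combination h1 + h2 - hv) (z3 hn)
      · exact absurd (show (5:ZMod n) = 0 by linear_combination h1 + h2 - hv) (z5 hn)
  | u, v, .cons (v := a) h (.cons (v := b) h' (.cons h'' .nil)), _, hv => by
      rw [cyc_adj] at h h' h''
      rcases h.2 with h1 | h1 <;> rcases h'.2 with h2 | h2 <;> rcases h''.2 with h3 | h3
      · have hb : b = u + 2 := by rw [h2, h1]; ring
        constructor
        · rw [← h1]; simp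
        · rw [← hb]; simp
      · exact absurd (show (2:ZMod n) = 0 by linear_combination h1 + h2 + h3 - hv) (z2 hn)
      · exact absurd (show (2:ZMod n) = 0 by linear_combination h1 + h2 + h3 - hv) (z2 hn)
      · exact absurd (show (4:ZMod n) = 0 by linear_combination h1 + h2 + h3 - hv) (z4 hn)
      · exact absurd (show (2:ZMod n) = 0 by linear_combination h1 + h2 + h3 - hv) (z2 hn)
      · exact absurd (show (4:ZMod n) = 0 by linear_combination h1 + h2 + h3 - hv) (z4 hn)
      · exact absurd (show (4:ZMod n) = 0 by linear_combination h1 + h2 + h3 - hv) (z4 hn)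
      · exact absurd (show (6:ZMod n) = 0 by linear_combination h1 + h2 + h3 - hv) (z6 hn)
  | u, v, .cons _ (.cons _ (.cons _ (.cons _ q))), hp, hv => by simp at hp; omega
end

section
variable {n : ℕ} (hn : 7 ≤ n)
include hn

lemma adj_succ (a b : ZMod n) (h : b = a + 1) : (cyc n).Adj a b :=
  cyc_adj.mpr ⟨fun he => z1 hn (by linear_combination -h - he), Or.inl h⟩

lemma dist2 (u v : ZMod n) (hv : v = u + 2) : (cyc n).dist u v ≤ 2 := by
  exact le_trans (SimpleGraph.dist_le
    (.cons (adj_succ hn u (u+1) rfl) (.cons (adj_succ hn (u+1) v (by rw [hv]; ring)) .nil)))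
    (by simp)

lemma dist3 (u v : ZMod n) (hv : v = u + 3) : (cyc n).dist u v ≤ 3 := by
  exact le_trans (SimpleGraph.dist_le
    (.cons (adj_succ hn u (u+1) rfl) (.cons (adj_succ hn (u+1) (u+2) (by ring))
      (.cons (adj_succ hn (u+2) v (by rw [hv]; ring)) .nil))))
    (by simp)

lemma cyc_reach (u v : ZMod n) : (cyc n).Reachable u v := by
  haveI : NeZero n := ⟨by omega⟩
  have key : ∀ (k : ℕ) (u : ZMod n), (cyc n).Reachable u (u + (k : ZMod n)) := by
    intro k
    induction k with
    | zero => intro u; simpa using SimpleGraph.Reachable.refl u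
    | succ k ih =>
        intro u
        refine (ih u).trans (SimpleGraph.Adj.reachable ?_)
        exact adj_succ hn _ _ (by push_cast; ring)
  have h := key (v - u).val u
  rw [ZMod.natCast_val, ZMod.cast_id, show u + (v - u) = v from by ring] at h
  exact h

lemma caseB {X : Set (ZMod n)} (hD : DualVis (cyc n) X) {a : ZMod n}
    (ha : a ∈ X) (ha1 : a + 1 ∈ X) : False := by
  have h2 : a + 2 ∉ X := by
    intro h2
    obtain ⟨p, hlen, hint⟩ := hD.1 ha h2
    have hm := walk2 hn p (hlen ▸ dist2 hn a (a+2) rfl) rfl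
    exact hint (a+1) hm (fun he => z1 hn (by linear_combination he))
      (fun he => z1 hn (by linear_combination -he)) ha1
  have hm1 : a - 1 ∉ X := by
    intro hm1
    obtain ⟨p, hlen, hint⟩ := hD.1 hm1 ha1
    have hm := walk2 hn p (hlen ▸ dist2 hn (a-1) (a+1) (by ring)) (by ring)
    rw [show a - 1 + 1 = a from by ring] at hm
    exact hint a hm (fun he => z1 hn (by linear_combination he))
      (fun he => z1 hn (by linear_combination -he)) ha
  obtain ⟨p, hlen, hint⟩ := hD.2 hm1 h2
  obtain ⟨hma, _⟩ := walk3 hn p (hlen ▸ dist3 hn (a-1) (a+2) (by ring)) (by ring)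
  rw [show a - 1 + 1 = a from by ring] at hma
  exact hint a hma (fun he => z1 hn (by linear_combination he))
    (fun he => z2 hn (by linear_combination -he)) ha
end

theorem stmt_19 (n : ℕ) (hn : 7 ≤ n) (X : Set (ZMod n)) :
    DualVis (cyc n) X ↔ X = ∅ := by
  constructor
  · intro hD
    by_contra hne
    obtain ⟨x, hx⟩ := Set.nonempty_iff_ne_empty.mpr hne
    by_cases h1 : x + 1 ∈ X
    · exact caseB hn hD hx h1
    by_cases h2 : x - 1 ∈ X
    · exact caseB hn hD h2 (by rwa [show x - 1 + 1 = x from by ring])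
    · obtain ⟨p, hlen, hint⟩ := hD.2 h2 h1
      have hm := walk2 hn p (hlen ▸ dist2 hn (x-1) (x+1) (by ring)) (by ring)
      rw [show x - 1 + 1 = x from by ring] at hm
      exact hint x hm (fun he => z1 hn (by linear_combination he))
        (fun he => z1 hn (by linear_combination -he)) hx
  · rintro rfl
    refine ⟨fun u hu => absurd hu (Set.notMem_empty u), fun u _ v _ => ?_⟩
    obtain ⟨p, hp⟩ := (cyc_reach hn u v).exists_walk_length_eq_dist
    exact ⟨p, hp, fun w _ _ _ => Set.notMem_empty w⟩
end
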